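/- arXiv:2602.22504 — 2 statements merged into one kernel-verified Lean document; each statement's English description precedes it below -/
import Mathlib

section
/- Let d_1, d_2 be even numbers, d = d_1+d_2, let λ_1 be a special symplectic partition of d_1 and λ_2 a special orthogonal partition of d_2. Let W = W(λ_1,λ_2) = λ_1+λ_2+ξ be the Waldspurger sequence for the type C data. Then: (i) W is a symplectic partition of d; (ii) if ν_1 is a B-collapse of (λ_1^t)^+, ν_2 is a D-collapse of λ_2^t, and ν is a B-collapse of (W^t)^+, then ν_1 ∪ ν_2 ≤ ν in dominance order; (iii) if moreover η is a C-collapse of ((ν_1 ∪ ν_2)^t)^−, then W ≤ η in dominance order. -/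
/-- `f` is a partition of `d`: weakly decreasing, finitely many nonzero terms, total sum `d`.
    Indexing is 0-based: `f j` is the `(j+1)`-st part. -/
def IsPartitionOf (f : ℕ → ℕ) (d : ℕ) : Prop :=
  Antitone f ∧ ∃ N, (∀ j, N ≤ j → f j = 0) ∧ ∑ j ∈ Finset.range N, f j = d

/-- Transpose of a partition (0-based): `ptrans f k` = #{j : f j ≥ k+1}, i.e. `(f^t)_{k+1}`. -/
noncomputable def ptrans (f : ℕ → ℕ) : ℕ → ℕ := fun k => Nat.card {j : ℕ // k + 1 ≤ f j}

/-- Multiplicity of the part `k` in `f` (meaningful for `k > 0`). -/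
noncomputable def pmult (f : ℕ → ℕ) (k : ℕ) : ℕ := Nat.card {j : ℕ // f j = k}

/-- Orthogonal: every even positive part occurs with even multiplicity. -/
def IsOrthogonal (f : ℕ → ℕ) : Prop := ∀ k, 0 < k → Even k → Even (pmult f k)

/-- Symplectic: every odd positive part occurs with even multiplicity. -/
def IsSymplectic (f : ℕ → ℕ) : Prop := ∀ k, 0 < k → Odd k → Even (pmult f k)

/-- Dominance order for ℕ-valued sequences. -/
def NDomLE (f g : ℕ → ℕ) : Prop :=
  ∀ N, ∑ j ∈ Finset.range N, f j ≤ ∑ j ∈ Finset.range N, g j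

/-- Dominance order for ℤ-valued sequences. -/
def DomLE (f g : ℕ → ℤ) : Prop :=
  ∀ N, ∑ j ∈ Finset.range N, f j ≤ ∑ j ∈ Finset.range N, g j

/-- `ν` is the `P`-collapse of `μ` (both of total size `m`): `ν` is a partition of `m`
    satisfying `P`, `ν ≤ μ`, and every partition `σ` of `m` satisfying `P` with `σ ≤ μ`
    satisfies `σ ≤ ν`. -/
def IsCollapse (P : (ℕ → ℕ) → Prop) (m : ℕ) (μ ν : ℕ → ℕ) : Prop :=
  IsPartitionOf ν m ∧ P ν ∧ NDomLE ν μ ∧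
    ∀ σ, IsPartitionOf σ m → P σ → NDomLE σ μ → NDomLE σ ν

/-- B-collapse (largest orthogonal partition below `μ`, `m` odd). -/
def IsBCollapse : ℕ → (ℕ → ℕ) → (ℕ → ℕ) → Prop := IsCollapse IsOrthogonal
/-- C-collapse (largest symplectic partition below `μ`, `m` even). -/
def IsCCollapse : ℕ → (ℕ → ℕ) → (ℕ → ℕ) → Prop := IsCollapse IsSymplectic
/-- D-collapse (largest orthogonal partition below `μ`, `m` even). -/
def IsDCollapse : ℕ → (ℕ → ℕ) → (ℕ → ℕ) → Prop := IsCollapse IsOrthogonal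

/-- `μ^−` : decrease the smallest nonzero part by 1. -/
def minusOne (f : ℕ → ℕ) : ℕ → ℕ :=
  fun j => if 0 < f j ∧ f (j+1) = 0 then f j - 1 else f j

/-- `μ^+` : increase the largest part by 1. -/
def plusOne (f : ℕ → ℕ) : ℕ → ℕ := fun j => if j = 0 then f 0 + 1 else f j

/-- `u = f ∪ g` : `u` is weakly decreasing, finitely supported, and every positive
    part occurs in `u` with multiplicity the sum of its multiplicities in `f` and `g`. -/
def IsUnionOf (u f g : ℕ → ℕ) : Prop :=
  Antitone u ∧ (∃ N, ∀ j, N ≤ j → u j = 0) ∧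
    ∀ k, 0 < k → pmult u k = pmult f k + pmult g k

/-- The sequence ξ attached to `(f, g, ε₁, ε₂, d)`.  Index `j` here corresponds to the
    1-based index `j+1` of the paper. -/
def xiSeq (f g : ℕ → ℕ) (e1 e2 d : ℕ) : ℕ → ℤ := fun j =>
  if (j + 1) % 2 = (d + 1) % 2 ∧ f j % 2 = e1 ∧ g j % 2 = e2 ∧
      (j = 0 ∨ f j + g j < f (j - 1) + g (j - 1)) then 1
  else if (j + 1) % 2 = d % 2 ∧ f j % 2 = e1 ∧ g j % 2 = e2 ∧
      f (j + 1) + g (j + 1) < f j + g j then -1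
  else 0

/-- The Waldspurger sequence `W(f,g) = f + g + ξ` (ℤ-valued a priori). -/
def wald (f g : ℕ → ℕ) (e1 e2 d : ℕ) : ℕ → ℤ :=
  fun j => (f j : ℤ) + (g j : ℤ) + xiSeq f g e1 e2 d j



namespace WaldAux



/-! ### Counting infrastructure -/

/-- number of `j < B` with `f j ≥ v`. -/
def cnt (f : ℕ → ℕ) (v B : ℕ) : ℕ := ((Finset.range B).filter (fun j => v ≤ f j)).card

lemma filter_eq_range (f : ℕ → ℕ) (hf : Antitone f) (v B : ℕ) :
    ∃ c, c ≤ B ∧ (Finset.range B).filter (fun j => v ≤ f j) = Finset.range c := by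
  induction B with
  | zero => exact ⟨0, le_rfl, by simp⟩
  | succ B ih =>
    rcases ih with ⟨c, hc, hfil⟩
    by_cases h : v ≤ f B
    · refine ⟨B + 1, le_rfl, ?_⟩
      apply Finset.filter_true_of_mem
      intro j hj
      exact le_trans h (hf (Nat.le_of_lt_succ (Finset.mem_range.mp hj)))
    · refine ⟨c, hc.trans (Nat.le_succ B), ?_⟩
      rw [Finset.range_add_one, Finset.filter_insert, if_neg h, hfil]

set_option linter.unusedVariables false

lemma cnt_le (f : ℕ → ℕ) (v B : ℕ) : cnt f v B ≤ B := by
  classical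
  calc cnt f v B ≤ (Finset.range B).card := Finset.card_filter_le _ _
  _ = B := Finset.card_range B

lemma lt_cnt_iff {f : ℕ → ℕ} (hf : Antitone f) {B : ℕ} (hB : ∀ j, B ≤ j → f j = 0)
    {v : ℕ} (hv : 1 ≤ v) (j : ℕ) : j < cnt f v B ↔ v ≤ f j := by
  obtain ⟨c, hc, hfil⟩ := filter_eq_range f hf v B
  have hcard : cnt f v B = c := by rw [cnt, hfil, Finset.card_range]
  rw [hcard]
  constructor
  · intro hj
    have : j ∈ Finset.range c := Finset.mem_range.mpr hj
    rw [← hfil, Finset.mem_filter] at this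
    exact this.2
  · intro hj
    have hjB : j < B := by
      by_contra hcon
      have := hB j (le_of_not_gt hcon)
      omega
    have : j ∈ (Finset.range B).filter (fun j => v ≤ f j) :=
      Finset.mem_filter.mpr ⟨Finset.mem_range.mpr hjB, hj⟩
    rw [hfil] at this
    exact Finset.mem_range.mp this

lemma natCard_eq_filter_card {p : ℕ → Prop} [DecidablePred p] {B : ℕ}
    (hB : ∀ j, p j → j < B) :
    Nat.card {j // p j} = ((Finset.range B).filter p).card := by
  have h : {j | p j} = (((Finset.range B).filter p : Finset ℕ) : Set ℕ) := by
    ext j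
    simp only [Set.mem_setOf_eq, Finset.coe_filter, Finset.mem_range, Set.mem_setOf_eq]
    exact ⟨fun h => ⟨hB j h, h⟩, fun h => h.2⟩
  calc Nat.card {j // p j} = Set.ncard {j | p j} := (Nat.card_coe_set_eq _).symm ▸ rfl
  _ = ((Finset.range B).filter p).card := by rw [h, Set.ncard_coe_finset]

lemma ptrans_eq_cnt {f : ℕ → ℕ} {B : ℕ} (hB : ∀ j, B ≤ j → f j = 0) (k : ℕ) :
    ptrans f k = cnt f (k + 1) B := by
  classical
  apply natCard_eq_filter_card
  intro j hj
  by_contra hcon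
  have := hB j (le_of_not_gt hcon)
  omega

lemma pmult_eq_filter_card {f : ℕ → ℕ} {B : ℕ} (hB : ∀ j, B ≤ j → f j = 0)
    {v : ℕ} (hv : 1 ≤ v) :
    pmult f v = ((Finset.range B).filter (fun j => f j = v)).card := by
  classical
  apply natCard_eq_filter_card
  intro j hj
  by_contra hcon
  have := hB j (le_of_not_gt hcon)
  omega

lemma pmult_eq_cnt_sub {f : ℕ → ℕ} (hf : Antitone f) {B : ℕ} (hB : ∀ j, B ≤ j → f j = 0)
    {v : ℕ} (hv : 1 ≤ v) :
    pmult f v = cnt f v B - cnt f (v + 1) B ∧ cnt f (v+1) B ≤ cnt f v B := by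
  classical
  have hsub : (Finset.range B).filter (fun j => v + 1 ≤ f j) ⊆
      (Finset.range B).filter (fun j => v ≤ f j) := by
    intro x hx
    simp only [Finset.mem_filter] at hx ⊢
    exact ⟨hx.1, by omega⟩
  constructor
  · rw [pmult_eq_filter_card hB hv]
    have heq : (Finset.range B).filter (fun j => f j = v) =
        ((Finset.range B).filter (fun j => v ≤ f j)) \
        ((Finset.range B).filter (fun j => v + 1 ≤ f j)) := by
      ext j
      simp only [Finset.mem_filter, Finset.mem_sdiff, Finset.mem_range]
      constructor
      · intro ⟨h1, h2⟩; exact ⟨⟨h1, by omega⟩, by intro ⟨_, h⟩; omega⟩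
      · intro ⟨⟨h1, h2⟩, h3⟩
        refine ⟨h1, ?_⟩
        by_contra hne
        exact h3 ⟨h1, by omega⟩
    rw [heq, Finset.card_sdiff_of_subset hsub]
    rfl
  · exact Finset.card_le_card hsub

/-- `min m M` as a counting sum. -/
lemma sum_ite_lt (m M : ℕ) :
    ∑ v ∈ Finset.range M, (if v < m then 1 else 0) = min m M := by
  induction M with
  | zero => simp
  | succ M ih =>
    rw [Finset.sum_range_succ, ih]
    by_cases h : M < m
    · rw [if_pos h]; omega
    · rw [if_neg h]; omega

/-- column sums: `∑_{j<B} min (f j) M = ∑_{v<M} cnt f (v+1) B`. -/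
lemma sum_min_eq_sum_cnt (f : ℕ → ℕ) (B M : ℕ) :
    ∑ j ∈ Finset.range B, min (f j) M = ∑ v ∈ Finset.range M, cnt f (v + 1) B := by
  classical
  have h1 : ∀ j, min (f j) M = ∑ v ∈ Finset.range M, (if v < f j then 1 else 0) := by
    intro j; rw [sum_ite_lt]
  calc ∑ j ∈ Finset.range B, min (f j) M
      = ∑ j ∈ Finset.range B, ∑ v ∈ Finset.range M, (if v < f j then 1 else 0) := by
        exact Finset.sum_congr rfl (fun j _ => h1 j)
  _ = ∑ v ∈ Finset.range M, ∑ j ∈ Finset.range B, (if v < f j then 1 else 0) :=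
      Finset.sum_comm
  _ = ∑ v ∈ Finset.range M, cnt f (v + 1) B := by
      apply Finset.sum_congr rfl
      intro v _
      rw [cnt, Finset.card_filter]
      apply Finset.sum_congr rfl
      intro j _
      by_cases h : v < f j
      · rw [if_pos h, if_pos (by omega : v + 1 ≤ f j)]
      · rw [if_neg h, if_neg (by omega : ¬ (v + 1 ≤ f j))]

/-- row sums: `∑_{j<a} f j = ∑_{v<V} min a (cnt f (v+1) B)`, for `V` beyond `f 0`. -/
lemma sum_prefix_eq_sum_min_cnt {f : ℕ → ℕ} (hf : Antitone f) {B : ℕ}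
    (hB : ∀ j, B ≤ j → f j = 0) {V : ℕ} (hV : f 0 ≤ V) (a : ℕ) :
    ∑ j ∈ Finset.range a, f j = ∑ v ∈ Finset.range V, min a (cnt f (v + 1) B) := by
  classical
  have hfj : ∀ j, f j ≤ V := fun j => le_trans (hf (Nat.zero_le j)) hV
  have h1 : ∀ j, f j = ∑ v ∈ Finset.range V, (if v < f j then 1 else 0) := by
    intro j; rw [sum_ite_lt]; exact (Nat.min_eq_left (hfj j)).symm
  calc ∑ j ∈ Finset.range a, f j
      = ∑ j ∈ Finset.range a, ∑ v ∈ Finset.range V, (if v < f j then 1 else 0) :=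
        Finset.sum_congr rfl (fun j _ => h1 j)
  _ = ∑ v ∈ Finset.range V, ∑ j ∈ Finset.range a, (if v < f j then 1 else 0) :=
      Finset.sum_comm
  _ = ∑ v ∈ Finset.range V, min a (cnt f (v + 1) B) := by
      apply Finset.sum_congr rfl
      intro v _
      have : ∀ j, (v < f j) ↔ (j < cnt f (v+1) B) := by
        intro j
        rw [lt_cnt_iff hf hB (by omega)]
        omega
      calc ∑ j ∈ Finset.range a, (if v < f j then 1 else 0)
          = ∑ j ∈ Finset.range a, (if j < cnt f (v+1) B then 1 else 0) := by
            apply Finset.sum_congr rfl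
            intro j _
            simp only [this j]
      _ = min (cnt f (v+1) B) a := sum_ite_lt _ _
      _ = min a (cnt f (v+1) B) := Nat.min_comm _ _

lemma sum_range_stable {f : ℕ → ℕ} {B : ℕ} (hB : ∀ j, B ≤ j → f j = 0) {N : ℕ}
    (hN : B ≤ N) : ∑ j ∈ Finset.range N, f j = ∑ j ∈ Finset.range B, f j := by
  symm
  apply Finset.sum_subset (Finset.range_subset_range.mpr hN)
  intro j hj hnj
  exact hB j (by simp only [Finset.mem_range] at hnj; omega)

lemma cnt_anti (f : ℕ → ℕ) (B : ℕ) : Antitone (fun v => cnt f v B) := by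
  intro a b hab
  apply Finset.card_le_card
  intro x hx
  simp only [Finset.mem_filter] at hx ⊢
  exact ⟨hx.1, le_trans hab hx.2⟩

lemma ptrans_antitone' {f : ℕ → ℕ} {B : ℕ} (hB : ∀ j, B ≤ j → f j = 0) :
    Antitone (ptrans f) := by
  intro a b hab
  rw [ptrans_eq_cnt hB, ptrans_eq_cnt hB]
  exact cnt_anti f B (by omega)

lemma cnt_eq_zero {f : ℕ → ℕ} (hf : Antitone f) {B v : ℕ} (hv : f 0 < v) :
    cnt f v B = 0 := by
  rw [cnt, Finset.card_eq_zero, Finset.filter_eq_empty_iff]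
  intro j _
  have := hf (Nat.zero_le j)
  omega

lemma ptrans_zero_of_big {f : ℕ → ℕ} (hf : Antitone f) {B : ℕ}
    (hB : ∀ j, B ≤ j → f j = 0) {k : ℕ} (hk : f 0 ≤ k) : ptrans f k = 0 := by
  rw [ptrans_eq_cnt hB]
  exact cnt_eq_zero hf (by omega)



/-! ### partition basics -/

lemma partition_sum_eq {f : ℕ → ℕ} {d : ℕ} (h : IsPartitionOf f d) {B : ℕ}
    (hB : ∀ j, B ≤ j → f j = 0) : ∑ j ∈ Finset.range B, f j = d := by
  obtain ⟨N0, hN0, hsum⟩ := h.2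
  have h1 : ∑ j ∈ Finset.range (max B N0), f j = ∑ j ∈ Finset.range B, f j :=
    sum_range_stable hB (le_max_left _ _)
  have h2 : ∑ j ∈ Finset.range (max B N0), f j = ∑ j ∈ Finset.range N0, f j :=
    sum_range_stable hN0 (le_max_right _ _)
  omega

lemma partition_prefix_le {f : ℕ → ℕ} {d : ℕ} (h : IsPartitionOf f d) (M : ℕ) :
    ∑ j ∈ Finset.range M, f j ≤ d := by
  obtain ⟨N0, hN0, hsum⟩ := h.2
  rcases le_or_gt M N0 with hM | hM
  · calc ∑ j ∈ Finset.range M, f j ≤ ∑ j ∈ Finset.range N0, f j :=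
      Finset.sum_le_sum_of_subset (Finset.range_subset_range.mpr hM)
    _ = d := hsum
  · rw [sum_range_stable hN0 (le_of_lt hM), hsum]

lemma even_sum_pairs {f : ℕ → ℕ} (hpar : ∀ k, f (2*k) % 2 = f (2*k+1) % 2) (k : ℕ) :
    (∑ j ∈ Finset.range (2*k), f j) % 2 = 0 := by
  induction k with
  | zero => simp
  | succ k ih =>
    have : 2*(k+1) = (2*k+1)+1 := by omega
    rw [this, Finset.sum_range_succ, Finset.sum_range_succ]
    have := hpar k
    omega

/-! ### the orthogonal-prefix parity lemma -/

lemma orth_prefix_parity {σ : ℕ → ℕ} (hσ : Antitone σ) (horth : IsOrthogonal σ)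
    {B : ℕ} (hB : ∀ j, B ≤ j → σ j = 0) {a : ℕ} (ha : 1 ≤ a)
    (hlt : σ a < σ (a-1)) :
    (a + ∑ j ∈ Finset.range a, σ j) % 2 = 0 := by
  classical
  -- a + Σ = Σ (1 + σ j) ≡ #evens
  have key : ∀ j ∈ Finset.range a, 1 + σ j
      = 2 * ((1 + σ j) / 2) + (if σ j % 2 = 0 then 1 else 0) := by
    intro j _
    rcases Nat.even_or_odd (σ j) with he | ho
    · have h2 := Nat.even_iff.mp he
      rw [if_pos h2]; omega
    · have h2 := Nat.odd_iff.mp ho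
      rw [if_neg (by omega)]; omega
  set E := (Finset.range a).filter (fun j => σ j % 2 = 0) with hE
  have step1 : a + ∑ j ∈ Finset.range a, σ j
      = 2 * (∑ j ∈ Finset.range a, ((1 + σ j) / 2)) + E.card := by
    have h0 : a + ∑ j ∈ Finset.range a, σ j = ∑ j ∈ Finset.range a, (1 + σ j) := by
      rw [Finset.sum_add_distrib, Finset.sum_const, Finset.card_range]; simp
    rw [h0, Finset.sum_congr rfl key, Finset.sum_add_distrib, ← Finset.mul_sum, hE,
      Finset.card_filter]
  -- E.card is even
  set VS := ((Finset.range (σ 0 + 1)).filter (fun v => v % 2 = 0 ∧ σ a < v)) with hVS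
  have hmap : ∀ j ∈ E, σ j ∈ VS := by
    intro j hj
    rw [hE, Finset.mem_filter, Finset.mem_range] at hj
    rw [hVS, Finset.mem_filter, Finset.mem_range]
    have h1 : σ j ≤ σ 0 := hσ (Nat.zero_le j)
    have h2 : σ (a-1) ≤ σ j := hσ (by omega)
    exact ⟨by omega, hj.2, by omega⟩
  have hfib : E.card = ∑ v ∈ VS, (E.filter (fun j => σ j = v)).card :=
    Finset.card_eq_sum_card_fiberwise hmap
  have hfibval : ∀ v ∈ VS, (E.filter (fun j => σ j = v)).card = pmult σ v := by
    intro v hv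
    rw [hVS, Finset.mem_filter, Finset.mem_range] at hv
    rw [pmult_eq_filter_card hB (by omega)]
    congr 1
    ext j
    rw [hE]
    simp only [Finset.mem_filter, Finset.mem_range]
    constructor
    · intro ⟨⟨hja, _⟩, hjv⟩
      refine ⟨?_, hjv⟩
      by_contra hc
      have := hB j (by omega)
      omega
    · intro ⟨hjB, hjv⟩
      have hja : j < a := by
        by_contra hc
        have : σ j ≤ σ a := hσ (by omega)
        omega
      exact ⟨⟨hja, by omega⟩, hjv⟩
  have heven : E.card % 2 = 0 := by
    rw [hfib, Finset.sum_congr rfl hfibval, Finset.sum_nat_mod]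
    have : ∀ v ∈ VS, pmult σ v % 2 = 0 := by
      intro v hv
      rw [hVS, Finset.mem_filter, Finset.mem_range] at hv
      have := horth v (by omega) (Nat.even_iff.mpr hv.2.1)
      exact Nat.even_iff.mp this
    rw [Finset.sum_congr rfl this]
    simp
  omega

/-- usable form: if the prefix-sum parity is bad, consecutive parts agree. -/
lemma orth_prefix_eq {σ : ℕ → ℕ} (hσ : Antitone σ) (horth : IsOrthogonal σ)
    {B : ℕ} (hB : ∀ j, B ≤ j → σ j = 0) {a : ℕ} (ha : 1 ≤ a)
    (hodd : (a + ∑ j ∈ Finset.range a, σ j) % 2 = 1) :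
    σ (a-1) = σ a := by
  by_contra hne
  have hle : σ a ≤ σ (a-1) := hσ (by omega)
  have := orth_prefix_parity hσ horth hB ha (by omega)
  omega

/-! ### pmult of the transpose -/

lemma pmult_ptrans {f : ℕ → ℕ} (hf : Antitone f) {B : ℕ} (hB : ∀ j, B ≤ j → f j = 0)
    {c : ℕ} (hc : 1 ≤ c) :
    pmult (ptrans f) c = f (c-1) - f c := by
  classical
  set B' := f 0 + 1 with hB'
  have hg : ∀ k, B' ≤ k → ptrans f k = 0 := by
    intro k hk
    exact ptrans_zero_of_big hf hB (by omega)
  have hganti : Antitone (ptrans f) := ptrans_antitone' hB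
  obtain ⟨hpm, _⟩ := pmult_eq_cnt_sub hganti hg hc
  have hcnt : ∀ c', 1 ≤ c' → cnt (ptrans f) c' B' = f (c'-1) := by
    intro c' hc'
    have hmem : ∀ k, (c' ≤ ptrans f k ↔ k < f (c'-1)) := by
      intro k
      rw [ptrans_eq_cnt hB]
      have := lt_cnt_iff hf hB (v := k+1) (by omega) (c'-1)
      constructor
      · intro h
        have : c'-1 < cnt f (k+1) B := by omega
        have := (lt_cnt_iff hf hB (v := k+1) (by omega) (c'-1)).mp this
        omega
      · intro h
        have : k+1 ≤ f (c'-1) := by omega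
        have := (lt_cnt_iff hf hB (v := k+1) (by omega) (c'-1)).mpr this
        omega
    rw [cnt]
    have : (Finset.range B').filter (fun k => c' ≤ ptrans f k) = Finset.range (f (c'-1)) := by
      ext k
      simp only [Finset.mem_filter, Finset.mem_range]
      constructor
      · intro ⟨_, h2⟩; exact (hmem k).mp h2
      · intro h
        have h2 : c' ≤ ptrans f k := (hmem k).mpr h
        have h3 : f (c'-1) ≤ f 0 := hf (Nat.zero_le _)
        exact ⟨by omega, h2⟩
    rw [this, Finset.card_range]
  rw [hpm, hcnt c hc, hcnt (c+1) (by omega)]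
  simp

/-! ### The setup -/

structure Stp where
  l1 : ℕ → ℕ
  l2 : ℕ → ℕ
  d1 : ℕ
  d2 : ℕ
  hd1 : d1 % 2 = 0
  hd2 : d2 % 2 = 0
  h1 : IsPartitionOf l1 d1
  h1sp : IsSymplectic l1
  h1s : IsSymplectic (ptrans l1)
  h2 : IsPartitionOf l2 d2
  h2o : IsOrthogonal l2
  h2s : IsSymplectic (ptrans l2)
  L : ℕ
  hL : 1 ≤ L
  hL1 : ∀ j, L ≤ j → l1 j = 0
  hL2 : ∀ j, L ≤ j → l2 j = 0

namespace Stp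

variable (S : Stp)

def s (j : ℕ) : ℕ := S.l1 j + S.l2 j
def T (j : ℕ) : Prop := S.l1 j % 2 = 0 ∧ S.l2 j % 2 = 1
def xi : ℕ → ℤ := xiSeq S.l1 S.l2 0 1 (S.d1 + S.d2)
def wd : ℕ → ℤ := wald S.l1 S.l2 0 1 (S.d1 + S.d2)
def w (j : ℕ) : ℕ := (S.wd j).toNat

lemma anti1 : Antitone S.l1 := S.h1.1
lemma anti2 : Antitone S.l2 := S.h2.1
lemma s_anti : Antitone S.s := fun _ _ h => Nat.add_le_add (S.anti1 h) (S.anti2 h)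

lemma M1a (k : ℕ) : S.l1 (2*k) % 2 = S.l1 (2*k+1) % 2 := by
  have h := S.h1s (2*k+1) (by omega) ⟨k, by omega⟩
  rw [pmult_ptrans S.anti1 S.hL1 (by omega : 1 ≤ 2*k+1)] at h
  obtain ⟨t, ht⟩ := h
  have hle : S.l1 (2*k+1) ≤ S.l1 (2*k+1-1) := S.anti1 (by omega)
  simp only [Nat.add_sub_cancel] at ht hle
  omega

lemma M1b (k : ℕ) : S.l2 (2*k) % 2 = S.l2 (2*k+1) % 2 := by
  have h := S.h2s (2*k+1) (by omega) ⟨k, by omega⟩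
  rw [pmult_ptrans S.anti2 S.hL2 (by omega : 1 ≤ 2*k+1)] at h
  obtain ⟨t, ht⟩ := h
  have hle : S.l2 (2*k+1) ≤ S.l2 (2*k+1-1) := S.anti2 (by omega)
  simp only [Nat.add_sub_cancel] at ht hle
  omega

/-- odd values of `l1` (special symplectic) come in equal pairs. -/
lemma M2 : ∀ k, S.l1 (2*k) % 2 = 1 → S.l1 (2*k) = S.l1 (2*k+1) := by
  intro k
  induction k using Nat.strong_induction_on with
  | _ k IH =>
    intro hodd
    by_contra hne
    set v := S.l1 (2*k) with hv
    have hlt : S.l1 (2*k+1) < v := by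
      have := S.anti1 (by omega : 2*k ≤ 2*k+1)
      omega
    have hiff := fun (u : ℕ) (hu : 1 ≤ u) (j : ℕ) => lt_cnt_iff S.anti1 S.hL1 hu j (B := S.L)
    have hvpos : 1 ≤ v := by omega
    have hc1 : cnt S.l1 v S.L = 2*k+1 := by
      have h1 : 2*k < cnt S.l1 v S.L := (hiff v hvpos (2*k)).mpr (by omega)
      have h2 : ¬ (2*k+1 < cnt S.l1 v S.L) := by
        intro hcon
        have := (hiff v hvpos (2*k+1)).mp hcon
        omega
      omega
    have hc2le : cnt S.l1 (v+1) S.L ≤ 2*k := by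
      by_contra hcon
      have := (hiff (v+1) (by omega) (2*k)).mp (by omega)
      omega
    have hmult := S.h1sp v (by omega) (Nat.odd_iff.mpr hodd)
    obtain ⟨hpm, hle'⟩ := pmult_eq_cnt_sub S.anti1 S.hL1 hvpos (B := S.L)
    rw [hpm, hc1] at hmult
    obtain ⟨t, ht⟩ := hmult
    set c2 := cnt S.l1 (v+1) S.L with hc2
    have hc2odd : c2 % 2 = 1 := by omega
    set k' := (c2 - 1)/2 with hk'
    have hc2eq : c2 = 2*k'+1 := by omega
    have hk'lt : k' < k := by omega
    have hge : v + 1 ≤ S.l1 (2*k') := (hiff (v+1) (by omega) (2*k')).mp (by omega)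
    have hval : S.l1 (2*k'+1) = v := by
      have h1 : v ≤ S.l1 (2*k'+1) := (hiff v hvpos (2*k'+1)).mp (by omega)
      have h2 : ¬ (v+1 ≤ S.l1 (2*k'+1)) := by
        intro hcon
        have := (hiff (v+1) (by omega) (2*k'+1)).mpr hcon
        omega
      omega
    have hpar := S.M1a k'
    have := IH k' hk'lt (by omega)
    omega

/-- positive even values of `l2` (special orthogonal) come in equal pairs. -/
lemma M3 : ∀ k, S.l2 (2*k) % 2 = 0 → S.l2 (2*k) = S.l2 (2*k+1) := by
  intro k
  induction k using Nat.strong_induction_on with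
  | _ k IH =>
    intro heven
    rcases Nat.eq_zero_or_pos (S.l2 (2*k)) with h0 | hpos
    · have := S.anti2 (by omega : 2*k ≤ 2*k+1)
      omega
    by_contra hne
    set v := S.l2 (2*k) with hv
    have hlt : S.l2 (2*k+1) < v := by
      have := S.anti2 (by omega : 2*k ≤ 2*k+1)
      omega
    have hiff := fun (u : ℕ) (hu : 1 ≤ u) (j : ℕ) => lt_cnt_iff S.anti2 S.hL2 hu j (B := S.L)
    have hvpos : 1 ≤ v := by omega
    have hc1 : cnt S.l2 v S.L = 2*k+1 := by
      have h1 : 2*k < cnt S.l2 v S.L := (hiff v hvpos (2*k)).mpr (by omega)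
      have h2 : ¬ (2*k+1 < cnt S.l2 v S.L) := by
        intro hcon
        have := (hiff v hvpos (2*k+1)).mp hcon
        omega
      omega
    have hc2le : cnt S.l2 (v+1) S.L ≤ 2*k := by
      by_contra hcon
      have := (hiff (v+1) (by omega) (2*k)).mp (by omega)
      omega
    have hmult := S.h2o v (by omega) (Nat.even_iff.mpr heven)
    obtain ⟨hpm, hle'⟩ := pmult_eq_cnt_sub S.anti2 S.hL2 hvpos (B := S.L)
    rw [hpm, hc1] at hmult
    obtain ⟨t, ht⟩ := hmult
    set c2 := cnt S.l2 (v+1) S.L with hc2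
    have hc2odd : c2 % 2 = 1 := by omega
    set k' := (c2 - 1)/2 with hk'
    have hc2eq : c2 = 2*k'+1 := by omega
    have hk'lt : k' < k := by omega
    have hge : v + 1 ≤ S.l2 (2*k') := (hiff (v+1) (by omega) (2*k')).mp (by omega)
    have hval : S.l2 (2*k'+1) = v := by
      have h1 : v ≤ S.l2 (2*k'+1) := (hiff v hvpos (2*k'+1)).mp (by omega)
      have h2 : ¬ (v+1 ≤ S.l2 (2*k'+1)) := by
        intro hcon
        have := (hiff (v+1) (by omega) (2*k'+1)).mpr hcon
        omega
      omega
    have hpar := S.M1b k'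
    have := IH k' hk'lt (by omega)
    omega

/-- s equal forces parts equal. -/
lemma M4 {j : ℕ} (h : S.s j = S.s (j+1)) :
    S.l1 j = S.l1 (j+1) ∧ S.l2 j = S.l2 (j+1) := by
  have h1 := S.anti1 (by omega : j ≤ j+1)
  have h2 := S.anti2 (by omega : j ≤ j+1)
  unfold s at h
  omega

lemma T_pair {k : ℕ} : S.T (2*k) ↔ S.T (2*k+1) := by
  unfold T
  have := S.M1a k
  have := S.M1b k
  omega

lemma T_of_s_eq {j : ℕ} (h : S.s j = S.s (j+1)) : S.T j ↔ S.T (j+1) := by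
  obtain ⟨h1, h2⟩ := S.M4 h
  unfold T
  omega

/-- generic even-index pair version of `T_pair`. -/
lemma T_pair' {j : ℕ} (hj : j % 2 = 0) : S.T j ↔ S.T (j+1) := by
  obtain ⟨k, hk⟩ : ∃ k, j = 2*k := ⟨j/2, by omega⟩
  subst hk
  exact S.T_pair

/-! ### xi characterizations -/

lemma xi_eq_one_iff (j : ℕ) :
    S.xi j = 1 ↔ (j % 2 = 0 ∧ S.T j ∧ (j = 0 ∨ S.s j < S.s (j-1))) := by
  have hd : (S.d1 + S.d2) % 2 = 0 := by have := S.hd1; have := S.hd2; omega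
  unfold xi xiSeq T s
  by_cases h1 : ((j + 1) % 2 = (S.d1 + S.d2 + 1) % 2 ∧ S.l1 j % 2 = 0 ∧ S.l2 j % 2 = 1 ∧
      (j = 0 ∨ S.l1 j + S.l2 j < S.l1 (j - 1) + S.l2 (j - 1)))
  · rw [if_pos h1]
    obtain ⟨ha, hb, hc, hd'⟩ := h1
    exact ⟨fun _ => ⟨by omega, ⟨hb, hc⟩, hd'⟩, fun _ => rfl⟩
  · rw [if_neg h1]
    constructor
    · intro hh
      by_cases h2 : ((j + 1) % 2 = (S.d1 + S.d2) % 2 ∧ S.l1 j % 2 = 0 ∧ S.l2 j % 2 = 1 ∧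
          S.l1 (j + 1) + S.l2 (j + 1) < S.l1 j + S.l2 j)
      · rw [if_pos h2] at hh; omega
      · rw [if_neg h2] at hh; omega
    · intro ⟨hp, ⟨ht1, ht2⟩, hc⟩
      exact absurd ⟨by omega, ht1, ht2, hc⟩ h1

lemma xi_eq_negone_iff (j : ℕ) :
    S.xi j = -1 ↔ (j % 2 = 1 ∧ S.T j ∧ S.s (j+1) < S.s j) := by
  have hd : (S.d1 + S.d2) % 2 = 0 := by have := S.hd1; have := S.hd2; omega
  unfold xi xiSeq T s
  by_cases h1 : ((j + 1) % 2 = (S.d1 + S.d2 + 1) % 2 ∧ S.l1 j % 2 = 0 ∧ S.l2 j % 2 = 1 ∧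
      (j = 0 ∨ S.l1 j + S.l2 j < S.l1 (j - 1) + S.l2 (j - 1)))
  · rw [if_pos h1]
    obtain ⟨ha, hb, hc, hd'⟩ := h1
    constructor
    · intro hh; omega
    · intro ⟨hp, _, _⟩; omega
  · rw [if_neg h1]
    by_cases h2 : ((j + 1) % 2 = (S.d1 + S.d2) % 2 ∧ S.l1 j % 2 = 0 ∧ S.l2 j % 2 = 1 ∧
        S.l1 (j + 1) + S.l2 (j + 1) < S.l1 j + S.l2 j)
    · rw [if_pos h2]
      obtain ⟨ha, hb, hc, hd'⟩ := h2
      exact ⟨fun _ => ⟨by omega, ⟨hb, hc⟩, hd'⟩, fun _ => rfl⟩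
    · rw [if_neg h2]
      constructor
      · intro hh; omega
      · intro ⟨hp, ⟨ht1, ht2⟩, hc⟩
        exact absurd ⟨by omega, ht1, ht2, hc⟩ h2

lemma xi_cases (j : ℕ) : S.xi j = 1 ∨ S.xi j = 0 ∨ S.xi j = -1 := by
  unfold xi xiSeq
  split_ifs <;> simp

lemma xi_zero_of_notT {j : ℕ} (h : ¬ S.T j) : S.xi j = 0 := by
  rcases S.xi_cases j with h1 | h1 | h1
  · exact absurd ((S.xi_eq_one_iff j).mp h1).2.1 h
  · exact h1
  · exact absurd ((S.xi_eq_negone_iff j).mp h1).2.1 h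

lemma xi_zero_beyond {j : ℕ} (hj : S.L ≤ j) : S.xi j = 0 := by
  apply S.xi_zero_of_notT
  intro ⟨_, h2⟩
  rw [S.hL2 j hj] at h2
  omega

/-- an odd-index `T` position with `xi = 0` has no s-drop after it. -/
lemma no_drop_of_xi_zero_odd {j : ℕ} (hj : j % 2 = 1) (hT : S.T j) (hz : S.xi j = 0) :
    S.s j = S.s (j+1) := by
  have hmono := S.s_anti (by omega : j ≤ j+1)
  by_contra hne
  have : S.xi j = -1 := (S.xi_eq_negone_iff j).mpr ⟨hj, hT, by omega⟩
  omega

/-- an even-index positive `T` position with `xi = 0` has no s-drop before it. -/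
lemma no_drop_of_xi_zero_even {j : ℕ} (hj : j % 2 = 0) (hT : S.T j) (hz : S.xi j = 0)
    (hj0 : j ≠ 0) : S.s (j-1) = S.s j := by
  have hmono := S.s_anti (by omega : j-1 ≤ j)
  by_contra hne
  have : S.xi j = 1 := (S.xi_eq_one_iff j).mpr ⟨hj, hT, Or.inr (by omega)⟩
  omega

/-! ### basic facts about W -/

lemma wd_eq (j : ℕ) : S.wd j = (S.s j : ℤ) + S.xi j := by
  unfold wd wald s xi
  push_cast
  ring

lemma wd_nonneg (j : ℕ) : 0 ≤ S.wd j := by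
  rw [S.wd_eq]
  rcases S.xi_cases j with h | h | h
  · rw [h]; positivity
  · rw [h]; simp
  · obtain ⟨_, ⟨_, hodd⟩, _⟩ := (S.xi_eq_negone_iff j).mp h
    rw [h]
    have : 1 ≤ S.s j := by unfold s; omega
    omega

lemma w_cast (j : ℕ) : (S.w j : ℤ) = S.wd j := Int.toNat_of_nonneg (S.wd_nonneg j)

lemma w_eq_iff (j : ℕ) : ∀ x : ℤ, (S.w j : ℤ) = x ↔ S.wd j = x := by
  intro x
  rw [S.w_cast]

lemma w_zero_beyond {j : ℕ} (hj : S.L ≤ j) : S.w j = 0 := by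
  have h1 := S.xi_zero_beyond hj
  have : S.wd j = 0 := by
    rw [S.wd_eq, h1]
    unfold s
    rw [S.hL1 j hj, S.hL2 j hj]
    simp
  unfold w
  rw [this]
  rfl

end Stp

namespace Stp

variable (S : Stp)

lemma s_odd_of_T {j : ℕ} (h : S.T j) : S.s j % 2 = 1 := by
  obtain ⟨h1, h2⟩ := h
  unfold s
  omega

/-- W is weakly decreasing. -/
lemma wd_succ_le (j : ℕ) : S.wd (j+1) ≤ S.wd j := by
  have hs := S.s_anti (by omega : j ≤ j+1)
  rw [S.wd_eq, S.wd_eq]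
  rcases S.xi_cases j with h1 | h1 | h1 <;> rcases S.xi_cases (j+1) with h2 | h2 | h2
  · obtain ⟨hp1, _, _⟩ := (S.xi_eq_one_iff j).mp h1
    obtain ⟨hp2, _, _⟩ := (S.xi_eq_one_iff (j+1)).mp h2
    omega
  · omega
  · omega
  · obtain ⟨hp2, _, hd⟩ := (S.xi_eq_one_iff (j+1)).mp h2
    have hdrop : S.s (j+1) < S.s j := by
      rcases hd with h | h
      · omega
      · simpa using h
    omega
  · omega
  · omega
  · obtain ⟨hp1, hT1, hdr⟩ := (S.xi_eq_negone_iff j).mp h1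
    obtain ⟨hp2, hT2, _⟩ := (S.xi_eq_one_iff (j+1)).mp h2
    have ho1 := S.s_odd_of_T hT1
    have ho2 := S.s_odd_of_T hT2
    omega
  · obtain ⟨_, _, hdr⟩ := (S.xi_eq_negone_iff j).mp h1
    omega
  · obtain ⟨hp1, _, _⟩ := (S.xi_eq_negone_iff j).mp h1
    obtain ⟨hp2, _, _⟩ := (S.xi_eq_negone_iff (j+1)).mp h2
    omega

lemma w_antitone : Antitone S.w := by
  apply antitone_nat_of_succ_le
  intro n
  unfold w
  exact Int.toNat_le_toNat (S.wd_succ_le n)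

/-- all positions in a pending run are in `T`. -/
lemma run_facts {p t : ℕ} (hp : S.xi p = 1)
    (hz : ∀ i, p < i → i < t → S.xi i = 0) :
    ∀ i, p ≤ i → i ≤ t → S.T i := by
  have hpe : p % 2 = 0 := ((S.xi_eq_one_iff p).mp hp).1
  have hTp : S.T p := ((S.xi_eq_one_iff p).mp hp).2.1
  intro i hpi
  induction i, hpi using Nat.le_induction with
  | base => intro _; exact hTp
  | succ i hpi' IH =>
    intro hit
    have hTi : S.T i := IH (by omega)
    rcases Nat.even_or_odd i with he | ho
    · exact (S.T_pair' (Nat.even_iff.mp he)).mp hTi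
    · have hio : i % 2 = 1 := Nat.odd_iff.mp ho
      have hpi2 : p < i := by omega
      have hzi : S.xi i = 0 := hz i hpi2 (by omega)
      have := S.no_drop_of_xi_zero_odd hio hTi hzi
      exact (S.T_of_s_eq this).mp hTi

/-- inside a pending run, odd positions have no s-drop after. -/
lemma run_s_eq {p t : ℕ} (hp : S.xi p = 1)
    (hz : ∀ i, p < i → i < t → S.xi i = 0) {i : ℕ} (hio : i % 2 = 1)
    (hpi : p ≤ i) (hit : i + 1 ≤ t) : S.s i = S.s (i+1) := by
  have hpe : p % 2 = 0 := ((S.xi_eq_one_iff p).mp hp).1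
  have hTi : S.T i := S.run_facts hp hz i hpi (by omega)
  have hpi2 : p < i := by omega
  exact S.no_drop_of_xi_zero_odd hio hTi (hz i hpi2 (by omega))

lemma no_plus_after_pending {p t : ℕ} (hp : S.xi p = 1)
    (hz : ∀ i, p < i → i < t → S.xi i = 0) (hpt : p < t) (h1 : S.xi t = 1) : False := by
  obtain ⟨hte, hTt, hdr⟩ := (S.xi_eq_one_iff t).mp h1
  have hpe : p % 2 = 0 := ((S.xi_eq_one_iff p).mp hp).1
  have ht0 : t ≠ 0 := by omega
  have hdrop : S.s t < S.s (t-1) := by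
    rcases hdr with h | h
    · omega
    · exact h
  have hodd : (t-1) % 2 = 1 := by omega
  have hplt : p < t - 1 := by omega
  have hT : S.T (t-1) := S.run_facts hp hz (t-1) (by omega) (by omega)
  have hz1 : S.xi (t-1) = 0 := hz (t-1) hplt (by omega)
  have := S.no_drop_of_xi_zero_odd hodd hT hz1
  have ht1 : t - 1 + 1 = t := by omega
  rw [ht1] at this
  omega

/-- every `T` position has a run start below it which carries `xi = 1`. -/
lemma T_run_start : ∀ t, S.T t →
    ∃ p, p ≤ t ∧ p % 2 = 0 ∧ S.xi p = 1 ∧ (∀ i, p ≤ i → i ≤ t → S.T i) := by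
  intro t
  induction t using Nat.strong_induction_on with
  | _ t IH =>
    intro hT
    rcases Nat.eq_zero_or_pos t with h0 | hpos
    · subst h0
      have hx : S.xi 0 = 1 := (S.xi_eq_one_iff 0).mpr ⟨by omega, hT, Or.inl rfl⟩
      refine ⟨0, le_rfl, by omega, hx, ?_⟩
      intro i h1 h2
      have : i = 0 := by omega
      rw [show i = 0 by omega]
      exact hT
    by_cases hprev : S.T (t-1)
    · obtain ⟨p, hp1, hp2, hp3, hp4⟩ := IH (t-1) (by omega) hprev
      refine ⟨p, by omega, hp2, hp3, ?_⟩
      intro i h1 h2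
      rcases Nat.lt_or_ge i t with h | h
      · exact hp4 i h1 (by omega)
      · have : i = t := by omega
        rw [this]; exact hT
    · -- t is a run start
      have hte : t % 2 = 0 := by
        by_contra hodd
        have h1 : t - 1 + 1 = t := by omega
        have := S.T_pair' (j := t-1) (by omega)
        rw [h1] at this
        exact hprev (this.mpr hT)
      have hdrop : S.s t < S.s (t-1) := by
        have hle := S.s_anti (by omega : t-1 ≤ t)
        by_contra hc
        have heq : S.s (t-1) = S.s (t-1+1) := by
          have h1 : t - 1 + 1 = t := by omega
          rw [h1]; omega
        have := S.T_of_s_eq heq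
        have h1 : t - 1 + 1 = t := by omega
        rw [h1] at this
        exact hprev (this.mpr hT)
      have hx : S.xi t = 1 := (S.xi_eq_one_iff t).mpr ⟨hte, hT, Or.inr hdrop⟩
      refine ⟨t, le_rfl, hte, hx, ?_⟩
      intro i h1 h2
      have : i = t := by omega
      rw [this]; exact hT

lemma no_minus_allzero {t : ℕ} (hz : ∀ i, i < t → S.xi i = 0) (h : S.xi t = -1) :
    False := by
  obtain ⟨hto, hTt, _⟩ := (S.xi_eq_negone_iff t).mp h
  obtain ⟨p, hp1, hp2, hp3, _⟩ := S.T_run_start t hTt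
  rcases Nat.lt_or_ge p t with hlt | hge
  · have := hz p hlt
    omega
  · have : p = t := by omega
    subst this
    omega

lemma no_minus_after_minus {m t : ℕ} (hm : S.xi m = -1)
    (hz : ∀ i, m < i → i < t → S.xi i = 0) (hmt : m < t) (h : S.xi t = -1) : False := by
  obtain ⟨hto, hTt, _⟩ := (S.xi_eq_negone_iff t).mp h
  obtain ⟨hmo, _, hmdrop⟩ := (S.xi_eq_negone_iff m).mp hm
  obtain ⟨p, hp1, hp2, hp3, hp4⟩ := S.T_run_start t hTt
  rcases Nat.lt_or_ge m p with hlt | hge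
  · -- m < p ≤ t, p even, so p < t; contradiction with zeros
    have hplt : p < t := by omega
    have := hz p (by omega) hplt
    omega
  · -- p ≤ m < t : then xi (m+1) = 1
    have hT1 : S.T (m+1) := hp4 (m+1) (by omega) (by omega)
    have hx1 : S.xi (m+1) = 1 := by
      apply (S.xi_eq_one_iff (m+1)).mpr
      refine ⟨by omega, hT1, Or.inr ?_⟩
      simpa using hmdrop
    rcases Nat.lt_or_ge (m+1) t with hlt | hge2
    · have := hz (m+1) (by omega) hlt
      omega
    · have : m + 1 = t := by omega
      subst this
      omega

/-! ### the main prefix induction -/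

def P (t : ℕ) : ℤ := ∑ j ∈ Finset.range t, S.xi j

def E (N t : ℕ) : ℤ :=
  ∑ j ∈ Finset.range t, (min (S.wd j) (N : ℤ) - min ((S.s j : ℤ)) (N : ℤ))

lemma P_succ (t : ℕ) : S.P (t+1) = S.P t + S.xi t := Finset.sum_range_succ _ _

lemma E_succ (N t : ℕ) :
    S.E N (t+1) = S.E N t + (min (S.wd t) (N : ℤ) - min ((S.s t : ℤ)) (N : ℤ)) :=
  Finset.sum_range_succ _ _

lemma e_plus {N t : ℕ} (h : S.xi t = 1) :
    min (S.wd t) (N : ℤ) - min ((S.s t : ℤ)) (N : ℤ) = if S.s t < N then 1 else 0 := by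
  rw [S.wd_eq, h]
  by_cases hc : S.s t < N
  · rw [if_pos hc]
    have : (S.s t : ℤ) < (N : ℤ) := by exact_mod_cast hc
    omega
  · rw [if_neg hc]
    have : (N : ℤ) ≤ (S.s t : ℤ) := by exact_mod_cast (by omega : N ≤ S.s t)
    omega

lemma e_zero {N t : ℕ} (h : S.xi t = 0) :
    min (S.wd t) (N : ℤ) - min ((S.s t : ℤ)) (N : ℤ) = 0 := by
  rw [S.wd_eq, h]
  omega

lemma e_minus {N t : ℕ} (h : S.xi t = -1) :
    min (S.wd t) (N : ℤ) - min ((S.s t : ℤ)) (N : ℤ) = if S.s t ≤ N then -1 else 0 := by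
  rw [S.wd_eq, h]
  by_cases hc : S.s t ≤ N
  · rw [if_pos hc]
    have : (S.s t : ℤ) ≤ (N : ℤ) := by exact_mod_cast hc
    omega
  · rw [if_neg hc]
    have : (N : ℤ) < (S.s t : ℤ) := by exact_mod_cast (by omega : N < S.s t)
    omega

def Pend (p t : ℕ) : Prop := p < t ∧ S.xi p = 1 ∧ ∀ i, p < i → i < t → S.xi i = 0

def Zst (t : ℕ) : Prop :=
  (∀ i, i < t → S.xi i = 0) ∨ ∃ m, m < t ∧ S.xi m = -1 ∧ ∀ i, m < i → i < t → S.xi i = 0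

def Str (N t : ℕ) : Prop :=
  ∃ p m, p < m ∧ m < t ∧ S.xi p = 1 ∧ S.xi m = -1 ∧
    (∀ i, p < i → i < m → S.xi i = 0) ∧ S.s m ≤ N ∧ N ≤ S.s p

lemma Str_mono {N t t' : ℕ} (h : S.Str N t) (htt : t ≤ t') : S.Str N t' := by
  obtain ⟨p, m, h1, h2, h3, h4, h5, h6, h7⟩ := h
  exact ⟨p, m, h1, by omega, h3, h4, h5, h6, h7⟩

def Inv (N t : ℕ) : Prop :=
  (S.P t = 0 ∧ S.E N t = 0 ∧ S.Zst t) ∨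
  (S.P t = 0 ∧ S.E N t = -1 ∧ S.Zst t ∧ S.Str N t) ∨
  (S.P t = 1 ∧ S.E N t = 1 ∧ ∃ p, S.Pend p t ∧ S.s p < N) ∨
  (S.P t = 1 ∧ S.E N t = 0 ∧ ∃ p, S.Pend p t ∧ (N ≤ S.s p ∨ S.Str N t))

lemma Zst_extend {t : ℕ} (h : S.Zst t) (hz : S.xi t = 0) : S.Zst (t+1) := by
  rcases h with h | ⟨m, h1, h2, h3⟩
  · left
    intro i hi
    rcases Nat.lt_or_ge i t with hh | hh
    · exact h i hh
    · have : i = t := by omega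
      rw [this]; exact hz
  · right
    refine ⟨m, by omega, h2, ?_⟩
    intro i hi1 hi2
    rcases Nat.lt_or_ge i t with hh | hh
    · exact h3 i hi1 hh
    · have : i = t := by omega
      rw [this]; exact hz

lemma Pend_extend {p t : ℕ} (h : S.Pend p t) (hz : S.xi t = 0) : S.Pend p (t+1) := by
  obtain ⟨h1, h2, h3⟩ := h
  refine ⟨by omega, h2, ?_⟩
  intro i hi1 hi2
  rcases Nat.lt_or_ge i t with hh | hh
  · exact h3 i hi1 hh
  · have : i = t := by omega
    rw [this]; exact hz

lemma Zst_no_minus {t : ℕ} (h : S.Zst t) (hx : S.xi t = -1) : False := by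
  rcases h with h | ⟨m, h1, h2, h3⟩
  · exact S.no_minus_allzero h hx
  · exact S.no_minus_after_minus h2 h3 h1 hx

lemma inv_step (N t : ℕ) (h : S.Inv N t) : S.Inv N (t+1) := by
  rcases S.xi_cases t with hx | hx | hx
  · -- xi t = 1
    rcases h with ⟨h1, h2, h3⟩ | ⟨h1, h2, h3, h4⟩ | ⟨h1, h2, p, hp, hsp⟩ | ⟨h1, h2, p, hp, hsp⟩
    · by_cases hc : S.s t < N
      · refine Or.inr (Or.inr (Or.inl ⟨?_, ?_, t, ⟨by omega, hx, fun i a b => by omega⟩, hc⟩))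
        · rw [S.P_succ, hx, h1]; ring
        · rw [S.E_succ, S.e_plus hx, if_pos hc, h2]; ring
      · refine Or.inr (Or.inr (Or.inr ⟨?_, ?_, t, ⟨by omega, hx, fun i a b => by omega⟩,
          Or.inl (by omega)⟩))
        · rw [S.P_succ, hx, h1]; ring
        · rw [S.E_succ, S.e_plus hx, if_neg hc, h2]
          ring
    · -- state B, xi = 1 : regain
      obtain ⟨p0, m0, hpm, hmt, hxp, hxm, hzs, hsm, hsp0⟩ := h4
      have hdrop : S.s (m0+1) < S.s m0 := ((S.xi_eq_negone_iff m0).mp hxm).2.2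
      have hst : S.s t < N := by
        have : S.s t ≤ S.s (m0+1) := S.s_anti (by omega : m0+1 ≤ t)
        omega
      refine Or.inr (Or.inr (Or.inr ⟨?_, ?_, t, ⟨by omega, hx, fun i a b => by omega⟩,
        Or.inr (S.Str_mono ⟨p0, m0, hpm, hmt, hxp, hxm, hzs, hsm, hsp0⟩ (by omega))⟩))
      · rw [S.P_succ, hx, h1]; ring
      · rw [S.E_succ, S.e_plus hx, if_pos hst, h2]
        ring
    · exact (S.no_plus_after_pending hp.2.1 hp.2.2 hp.1 hx).elim
    · exact (S.no_plus_after_pending hp.2.1 hp.2.2 hp.1 hx).elim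
  · -- xi t = 0 : all states persist
    rcases h with ⟨h1, h2, h3⟩ | ⟨h1, h2, h3, h4⟩ | ⟨h1, h2, p, hp, hsp⟩ | ⟨h1, h2, p, hp, hsp⟩
    · exact Or.inl ⟨by rw [S.P_succ, hx, h1]; ring, by rw [S.E_succ, S.e_zero hx, h2]; ring,
        S.Zst_extend h3 hx⟩
    · exact Or.inr (Or.inl ⟨by rw [S.P_succ, hx, h1]; ring, by rw [S.E_succ, S.e_zero hx, h2]; ring,
        S.Zst_extend h3 hx, S.Str_mono h4 (by omega)⟩)
    · exact Or.inr (Or.inr (Or.inl ⟨by rw [S.P_succ, hx, h1]; ring,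
        by rw [S.E_succ, S.e_zero hx, h2]; ring, p, S.Pend_extend hp hx, hsp⟩))
    · refine Or.inr (Or.inr (Or.inr ⟨by rw [S.P_succ, hx, h1]; ring,
        by rw [S.E_succ, S.e_zero hx, h2]; ring, p, S.Pend_extend hp hx, ?_⟩))
      rcases hsp with hh | hh
      · exact Or.inl hh
      · exact Or.inr (S.Str_mono hh (by omega))
  · -- xi t = -1
    rcases h with ⟨h1, h2, h3⟩ | ⟨h1, h2, h3, h4⟩ | ⟨h1, h2, p, hp, hsp⟩ | ⟨h1, h2, p, hp, hsp⟩
    · exact (S.Zst_no_minus h3 hx).elim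
    · exact (S.Zst_no_minus h3 hx).elim
    · -- state C : close with net 0
      have hst : S.s t ≤ N := by
        have h5 : S.s t ≤ S.s p := S.s_anti (le_of_lt hp.1)
        omega
      refine Or.inl ⟨?_, ?_, Or.inr ⟨t, by omega, hx, fun i a b => by omega⟩⟩
      · rw [S.P_succ, hx, h1]; ring
      · rw [S.E_succ, S.e_minus hx, if_pos hst, h2]; ring
    · -- state D : lose or ignore
      by_cases hc : S.s t ≤ N
      · refine Or.inr (Or.inl ⟨?_, ?_, Or.inr ⟨t, by omega, hx, fun i a b => by omega⟩, ?_⟩)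
        · rw [S.P_succ, hx, h1]; ring
        · rw [S.E_succ, S.e_minus hx, if_pos hc, h2]; ring
        · rcases hsp with hh | hh
          · exact ⟨p, t, hp.1, by omega, hp.2.1, hx, hp.2.2, hc, hh⟩
          · exact S.Str_mono hh (by omega)
      · refine Or.inl ⟨?_, ?_, Or.inr ⟨t, by omega, hx, fun i a b => by omega⟩⟩
        · rw [S.P_succ, hx, h1]; ring
        · rw [S.E_succ, S.e_minus hx, if_neg hc, h2]; ring

lemma inv_all (N t : ℕ) : S.Inv N t := by
  induction t with
  | zero =>
    left
    refine ⟨rfl, rfl, Or.inl ?_⟩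
    intro i hi
    omega
  | succ t ih => exact S.inv_step N t ih

lemma final_state (N : ℕ) {t : ℕ} (ht : S.L + 1 ≤ t) :
    (S.P t = 0 ∧ S.E N t = 0) ∨ (S.P t = 0 ∧ S.E N t = -1 ∧ S.Str N t) := by
  have h := S.inv_all N t
  have hnopend : ∀ p, ¬ (S.Pend p t) := by
    intro p ⟨hp1, hp2, hp3⟩
    have hT : S.T (t-1) := S.run_facts hp2 hp3 (t-1) ?_ (by omega)
    · obtain ⟨_, hodd⟩ := hT
      have := S.hL2 (t-1) (by omega)
      omega
    · -- p ≤ t-1 : since xi p = 1 requires T p requires l2 p odd, p < L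
      have hTp : S.T p := ((S.xi_eq_one_iff p).mp hp2).2.1
      obtain ⟨_, hodd⟩ := hTp
      by_contra hcon
      have := S.hL2 p (by omega)
      omega
  rcases h with ⟨h1, h2, _⟩ | ⟨h1, h2, _, h4⟩ | ⟨_, _, p, hp, _⟩ | ⟨_, _, p, hp, _⟩
  · exact Or.inl ⟨h1, h2⟩
  · exact Or.inr ⟨h1, h2, h4⟩
  · exact absurd hp (hnopend p)
  · exact absurd hp (hnopend p)

end Stp

namespace Stp

variable (S : Stp)

lemma w_eq_iff_wd {j v : ℕ} : S.w j = v ↔ S.wd j = (v : ℤ) := by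
  constructor
  · intro h; rw [← S.w_cast, h]
  · intro h; have := S.w_cast j; omega

lemma sum_w_eq : ∑ j ∈ Finset.range (S.L + 1), S.w j = S.d1 + S.d2 := by
  have hcast : ((∑ j ∈ Finset.range (S.L+1), S.w j : ℕ) : ℤ)
      = ∑ j ∈ Finset.range (S.L+1), S.wd j := by
    push_cast
    exact Finset.sum_congr rfl (fun j _ => S.w_cast j)
  have hsplit : ∑ j ∈ Finset.range (S.L+1), S.wd j
      = (∑ j ∈ Finset.range (S.L+1), (S.s j : ℤ)) + S.P (S.L+1) := by
    rw [Stp.P, ← Finset.sum_add_distrib]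
    exact Finset.sum_congr rfl (fun j _ => S.wd_eq j)
  have hP : S.P (S.L+1) = 0 := by
    rcases S.final_state 0 (le_refl (S.L+1)) with ⟨h, _⟩ | ⟨h, _⟩ <;> exact h
  have hs : ∑ j ∈ Finset.range (S.L+1), S.s j = S.d1 + S.d2 := by
    unfold s
    rw [Finset.sum_add_distrib,
      partition_sum_eq S.h1 (fun j hj => S.hL1 j (by omega)),
      partition_sum_eq S.h2 (fun j hj => S.hL2 j (by omega))]
  have hs' : ∑ j ∈ Finset.range (S.L+1), ((S.s j : ℤ)) = ((S.d1 + S.d2 : ℕ) : ℤ) := by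
    rw [← Nat.cast_sum]
    exact_mod_cast congrArg (Nat.cast : ℕ → ℤ) hs
  have : ((∑ j ∈ Finset.range (S.L+1), S.w j : ℕ) : ℤ) = ((S.d1 + S.d2 : ℕ) : ℤ) := by
    rw [hcast, hsplit, hP, hs']; ring
  exact_mod_cast this

lemma w_partition : IsPartitionOf S.w (S.d1 + S.d2) := by
  refine ⟨S.w_antitone, S.L + 1, ?_, S.sum_w_eq⟩
  intro j hj
  exact S.w_zero_beyond (by omega)

/-- at a position where W has an odd value, xi vanishes and s equals that value. -/
lemma odd_pos_props {v j : ℕ} (hv : v % 2 = 1) (hw : S.w j = v) :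
    S.xi j = 0 ∧ S.s j = v := by
  rw [S.w_eq_iff_wd] at hw
  rw [S.wd_eq] at hw
  rcases S.xi_cases j with h | h | h
  · obtain ⟨_, hT, _⟩ := (S.xi_eq_one_iff j).mp h
    have := S.s_odd_of_T hT
    rw [h] at hw
    omega
  · rw [h] at hw
    constructor
    · exact h
    · omega
  · obtain ⟨_, hT, _⟩ := (S.xi_eq_negone_iff j).mp h
    have := S.s_odd_of_T hT
    rw [h] at hw
    omega

lemma w_of_s_xi {v j : ℕ} (hs : S.s j = v) (hx : S.xi j = 0) : S.w j = v := by
  rw [S.w_eq_iff_wd, S.wd_eq, hx, hs]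
  ring

lemma Tprime_of {v j : ℕ} (hv : v % 2 = 1) (hs : S.s j = v) (hT : ¬ S.T j) :
    S.l1 j % 2 = 1 ∧ S.l2 j % 2 = 0 := by
  unfold T at hT
  unfold s at hs
  omega

/-- partner for odd-index T positions. -/
lemma partner_odd_T {v j : ℕ} (hv : v % 2 = 1) (hw : S.w j = v) (hT : S.T j)
    (hodd : j % 2 = 1) : S.w (j+1) = v ∧ S.T (j+1) := by
  obtain ⟨hx, hs⟩ := S.odd_pos_props hv hw
  have hseq : S.s j = S.s (j+1) := S.no_drop_of_xi_zero_odd hodd hT hx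
  have hT1 : S.T (j+1) := (S.T_of_s_eq hseq).mp hT
  have hx1 : S.xi (j+1) = 0 := by
    rcases S.xi_cases (j+1) with h | h | h
    · obtain ⟨_, _, hdr⟩ := (S.xi_eq_one_iff (j+1)).mp h
      rcases hdr with h' | h'
      · omega
      · simp only [Nat.add_sub_cancel] at h'
        omega
    · exact h
    · obtain ⟨hp, _, _⟩ := (S.xi_eq_negone_iff (j+1)).mp h
      omega
  exact ⟨S.w_of_s_xi (by omega) hx1, hT1⟩

/-- partner for even-index T positions. -/
lemma partner_even_T {v j : ℕ} (hv : v % 2 = 1) (hw : S.w j = v) (hT : S.T j)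
    (heven : j % 2 = 0) : j ≠ 0 ∧ S.w (j-1) = v ∧ S.T (j-1) ∧ (j-1) % 2 = 1 := by
  obtain ⟨hx, hs⟩ := S.odd_pos_props hv hw
  have hj0 : j ≠ 0 := by
    intro h0
    subst h0
    have : S.xi 0 = 1 := (S.xi_eq_one_iff 0).mpr ⟨by omega, hT, Or.inl rfl⟩
    omega
  have hseq : S.s (j-1) = S.s j := S.no_drop_of_xi_zero_even heven hT hx hj0
  have hseq' : S.s (j-1) = S.s ((j-1)+1) := by
    rw [show j - 1 + 1 = j by omega]
    exact hseq
  have hT1 : S.T (j-1) := by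
    have := S.T_of_s_eq hseq'
    rw [show j - 1 + 1 = j by omega] at this
    exact this.mpr hT
  have hx1 : S.xi (j-1) = 0 := by
    rcases S.xi_cases (j-1) with h | h | h
    · obtain ⟨hp, _, _⟩ := (S.xi_eq_one_iff (j-1)).mp h
      omega
    · exact h
    · obtain ⟨_, _, hdr⟩ := (S.xi_eq_negone_iff (j-1)).mp h
      rw [show j - 1 + 1 = j by omega] at hdr
      omega
  exact ⟨hj0, S.w_of_s_xi (by omega) hx1, hT1, by omega⟩

/-- partner for even-index T' positions. -/
lemma partner_even_T' {v j : ℕ} (hv : v % 2 = 1) (hw : S.w j = v) (hT : ¬ S.T j)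
    (heven : j % 2 = 0) : S.w (j+1) = v ∧ ¬ S.T (j+1) := by
  obtain ⟨hx, hs⟩ := S.odd_pos_props hv hw
  obtain ⟨h1o, h2e⟩ := S.Tprime_of hv hs hT
  obtain ⟨k, hk⟩ : ∃ k, j = 2*k := ⟨j/2, by omega⟩
  subst hk
  have he1 : S.l1 (2*k) = S.l1 (2*k+1) := S.M2 k h1o
  have he2 : S.l2 (2*k) = S.l2 (2*k+1) := S.M3 k h2e
  have hseq : S.s (2*k+1) = v := by
    unfold s at hs ⊢
    omega
  have hT1 : ¬ S.T (2*k+1) := by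
    unfold T at hT ⊢
    omega
  exact ⟨S.w_of_s_xi hseq (S.xi_zero_of_notT hT1), hT1⟩

/-- partner for odd-index T' positions. -/
lemma partner_odd_T' {v j : ℕ} (hv : v % 2 = 1) (hw : S.w j = v) (hT : ¬ S.T j)
    (hodd : j % 2 = 1) : S.w (j-1) = v ∧ ¬ S.T (j-1) ∧ (j-1) % 2 = 0 := by
  obtain ⟨hx, hs⟩ := S.odd_pos_props hv hw
  obtain ⟨h1o, h2e⟩ := S.Tprime_of hv hs hT
  obtain ⟨k, hk⟩ : ∃ k, j = 2*k+1 := ⟨j/2, by omega⟩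
  subst hk
  have hpar1 := S.M1a k
  have hpar2 := S.M1b k
  have he1 : S.l1 (2*k) = S.l1 (2*k+1) := S.M2 k (by omega)
  have he2 : S.l2 (2*k) = S.l2 (2*k+1) := S.M3 k (by omega)
  have hseq : S.s (2*k) = v := by
    unfold s at hs ⊢
    omega
  have hT1 : ¬ S.T (2*k) := by
    unfold T at hT ⊢
    omega
  have : (2*k+1) - 1 = 2*k := by omega
  rw [this]
  exact ⟨S.w_of_s_xi hseq (S.xi_zero_of_notT hT1), hT1, by omega⟩

lemma w_symplectic : IsSymplectic S.w := by
  intro v hv hodd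
  classical
  have hvo : v % 2 = 1 := Nat.odd_iff.mp hodd
  have hBw : ∀ j, S.L ≤ j → S.w j = 0 := fun j hj => S.w_zero_beyond hj
  rw [pmult_eq_filter_card hBw (by omega)]
  set F := (Finset.range S.L).filter (fun j => S.w j = v) with hF
  have hmemF : ∀ j, j ∈ F ↔ S.w j = v := by
    intro j
    rw [hF, Finset.mem_filter, Finset.mem_range]
    constructor
    · exact fun h => h.2
    · intro h
      refine ⟨?_, h⟩
      by_contra hc
      have := hBw j (by omega)
      omega
  -- Lf j : the partner of j is j+1
  have hsplit := Finset.card_filter_add_card_filter_not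
    (s := F) (p := fun j => (S.l1 j + j) % 2 = 1)
  -- facts about membership in the two halves
  have hbij : (F.filter (fun j => (S.l1 j + j) % 2 = 1)).card
      = (F.filter (fun j => ¬ ((S.l1 j + j) % 2 = 1))).card := by
    refine Finset.card_bij' (fun j _ => j + 1) (fun j _ => j - 1) ?_ ?_ ?_ ?_
    · -- forward map lands in right half
      intro a ha
      rw [Finset.mem_filter] at ha
      obtain ⟨haF, haL⟩ := ha
      have haw : S.w a = v := (hmemF a).mp haF
      have key : S.w (a+1) = v ∧ ¬ ((S.l1 (a+1) + (a+1)) % 2 = 1) := by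
        by_cases hTa : S.T a
        · have h1e : S.l1 a % 2 = 0 := hTa.1
          obtain ⟨hw1, hT1⟩ := S.partner_odd_T hvo haw hTa (by omega)
          have h1e' : S.l1 (a+1) % 2 = 0 := hT1.1
          exact ⟨hw1, by omega⟩
        · have hs1 := (S.odd_pos_props hvo haw).2
          obtain ⟨h1o, _⟩ := S.Tprime_of hvo hs1 hTa
          obtain ⟨hw1, hT1⟩ := S.partner_even_T' hvo haw hTa (by omega)
          have hs1' := (S.odd_pos_props hvo hw1).2
          obtain ⟨h1o', _⟩ := S.Tprime_of hvo hs1' hT1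
          exact ⟨hw1, by omega⟩
      exact Finset.mem_filter.mpr ⟨(hmemF (a+1)).mpr key.1, key.2⟩
    · -- backward map lands in left half
      intro b hb
      rw [Finset.mem_filter] at hb
      obtain ⟨hbF, hbL⟩ := hb
      have hbw : S.w b = v := (hmemF b).mp hbF
      have key : S.w (b-1) = v ∧ (S.l1 (b-1) + (b-1)) % 2 = 1 := by
        by_cases hTb : S.T b
        · have h1e : S.l1 b % 2 = 0 := hTb.1
          obtain ⟨hb0, hw1, hT1, hodd1⟩ := S.partner_even_T hvo hbw hTb (by omega)
          have h1e' : S.l1 (b-1) % 2 = 0 := hT1.1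
          exact ⟨hw1, by omega⟩
        · have hs1 := (S.odd_pos_props hvo hbw).2
          obtain ⟨h1o, _⟩ := S.Tprime_of hvo hs1 hTb
          obtain ⟨hw1, hT1, heven1⟩ := S.partner_odd_T' hvo hbw hTb (by omega)
          have hs1' := (S.odd_pos_props hvo hw1).2
          obtain ⟨h1o', _⟩ := S.Tprime_of hvo hs1' hT1
          exact ⟨hw1, by omega⟩
      exact Finset.mem_filter.mpr ⟨(hmemF (b-1)).mpr key.1, key.2⟩
    · intro a ha
      show a + 1 - 1 = a
      omega
    · intro b hb
      rw [Finset.mem_filter] at hb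
      obtain ⟨hbF, hbL⟩ := hb
      have hbw : S.w b = v := (hmemF b).mp hbF
      have hb1 : 1 ≤ b := by
        by_contra hc
        have hb0 : b = 0 := by omega
        subst hb0
        by_cases hTb : S.T 0
        · obtain ⟨h0, _, _, _⟩ := S.partner_even_T hvo hbw hTb (by
            have := hTb.1; omega)
          exact h0 rfl
        · have hs1 := (S.odd_pos_props hvo hbw).2
          obtain ⟨h1o, _⟩ := S.Tprime_of hvo hs1 hTb
          omega
      show b - 1 + 1 = b
      omega
  rw [Nat.even_iff]
  omega

end Stp

/-! ### downward-closed counting -/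

lemma filter_eq_range_dc {p : ℕ → Prop} [DecidablePred p]
    (hdc : ∀ j, p (j+1) → p j) (B : ℕ) :
    ∃ c, c ≤ B ∧ (Finset.range B).filter p = Finset.range c := by
  induction B with
  | zero => exact ⟨0, le_rfl, by simp⟩
  | succ B ih =>
    rcases ih with ⟨c, hc, hfil⟩
    by_cases h : p B
    · refine ⟨B + 1, le_rfl, ?_⟩
      apply Finset.filter_true_of_mem
      intro j hj
      rw [Finset.mem_range] at hj
      -- p holds downward from B
      have hstep : ∀ i, i ≤ B → p (B - i) := by
        intro i
        induction i with
        | zero => intro _; simpa using h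
        | succ i ih2 =>
          intro hi
          have h1 : p (B - i) := ih2 (by omega)
          have h2 : B - (i+1) + 1 = B - i := by omega
          exact hdc _ (by rw [h2]; exact h1)
      have := hstep (B - j) (by omega)
      rw [show B - (B - j) = j by omega] at this
      exact this
    · refine ⟨c, by omega, ?_⟩
      rw [Finset.range_add_one, Finset.filter_insert, if_neg h, hfil]

lemma lt_dcCount_iff {p : ℕ → Prop} [DecidablePred p]
    (hdc : ∀ j, p (j+1) → p j) {B : ℕ} (hB : ¬ p B) (j : ℕ) :
    j < ((Finset.range B).filter p).card ↔ p j := by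
  obtain ⟨c, hc, hfil⟩ := filter_eq_range_dc hdc B
  rw [hfil, Finset.card_range]
  have hnotup : ∀ i, B ≤ i → ¬ p i := by
    intro i hi hpi
    -- downward closure to B
    have hstep : ∀ t, p (B + t) → p B := by
      intro t
      induction t with
      | zero => intro hh; simpa using hh
      | succ t ih2 =>
        intro hh
        exact ih2 (hdc _ (by rw [show B + t + 1 = B + (t+1) by omega]; exact hh))
    exact hB (hstep (i - B) (by rw [show B + (i - B) = i by omega]; exact hpi))
  constructor
  · intro hj
    have : j ∈ Finset.range c := Finset.mem_range.mpr hj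
    rw [← hfil, Finset.mem_filter] at this
    exact this.2
  · intro hpj
    have hjB : j < B := by
      by_contra hcon
      exact hnotup j (by omega) hpj
    have : j ∈ (Finset.range B).filter p := Finset.mem_filter.mpr ⟨Finset.mem_range.mpr hjB, hpj⟩
    rw [hfil, Finset.mem_range] at this
    exact this

lemma sum_mod_two_even {s : Finset ℕ} {f : ℕ → ℕ} (h : ∀ j ∈ s, f j % 2 = 0) :
    (∑ j ∈ s, f j) % 2 = 0 := by
  rw [Finset.sum_nat_mod, Finset.sum_congr rfl h]
  simp

lemma sum_mod_two_odd {s : Finset ℕ} {f : ℕ → ℕ} (h : ∀ j ∈ s, f j % 2 = 1) :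
    (∑ j ∈ s, f j) % 2 = s.card % 2 := by
  rw [Finset.sum_nat_mod, Finset.sum_congr rfl h, Finset.sum_const, smul_eq_mul, mul_one]

namespace Stp

variable (S : Stp)

def B0 : ℕ := S.L + 1

/-- `A a = ∑_j min(λ1_j, a)` -/
def Aa (a : ℕ) : ℕ := ∑ j ∈ Finset.range S.B0, min (S.l1 j) a
def Bb (b : ℕ) : ℕ := ∑ j ∈ Finset.range S.B0, min (S.l2 j) b
def SW (N : ℕ) : ℕ := ∑ j ∈ Finset.range S.B0, min (S.w j) N
def Sn (N : ℕ) : ℕ := ∑ j ∈ Finset.range S.B0, min (S.s j) N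

lemma E_eq_SW_sub_Sn (N : ℕ) : S.E N S.B0 = (S.SW N : ℤ) - (S.Sn N : ℤ) := by
  unfold E SW Sn
  push_cast
  rw [← Finset.sum_sub_distrib]
  apply Finset.sum_congr rfl
  intro j _
  rw [← S.w_cast j]

lemma Sn_cases (N : ℕ) : S.Sn N = S.SW N ∨ (S.Sn N = S.SW N + 1 ∧ S.Str N S.B0) := by
  have hE := S.E_eq_SW_sub_Sn N
  rcases S.final_state N (t := S.B0) (Nat.le_of_eq rfl) with ⟨_, h⟩ | ⟨_, h, hstr⟩
  · left; rw [h] at hE; omega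
  · right; rw [h] at hE; exact ⟨by omega, hstr⟩

lemma m_le_n (a b j : ℕ) : min (S.l1 j) a + min (S.l2 j) b ≤ min (S.s j) (a+b) := by
  unfold s; omega

lemma sum_m_eq (a b : ℕ) :
    S.Aa a + S.Bb b = ∑ j ∈ Finset.range S.B0, (min (S.l1 j) a + min (S.l2 j) b) := by
  unfold Aa Bb
  rw [← Finset.sum_add_distrib]

/-- the main inequality (F1). -/
lemma LF_main (a b : ℕ) :
    (if 1 ≤ a then 1 else 0) + S.Aa a + S.Bb b ≤ 2 + S.SW (a+b) := by
  have h1 : S.Aa a + S.Bb b ≤ S.Sn (a+b) := by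
    rw [sum_m_eq]
    exact Finset.sum_le_sum (fun j _ => S.m_le_n a b j)
  have h2 : S.Sn (a+b) ≤ S.SW (a+b) + 1 := by
    rcases S.Sn_cases (a+b) with h | ⟨h, _⟩ <;> omega
  split_ifs <;> omega

/-- the equality analysis (F2). -/
lemma LF_eq (a b : ℕ)
    (heq : (if 1 ≤ a then 1 else 0) + S.Aa a + S.Bb b = 2 + S.SW (a+b)) :
    1 ≤ a ∧ 1 ≤ b ∧ (a + 1 + S.Aa a) % 2 = 1 ∧ (b + S.Bb b) % 2 = 1 := by
  classical
  set N := a + b with hN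
  have hmn : S.Aa a + S.Bb b ≤ S.Sn N := by
    rw [sum_m_eq]
    exact Finset.sum_le_sum (fun j _ => S.m_le_n a b j)
  have hSn : S.Sn N ≤ S.SW N + 1 := by
    rcases S.Sn_cases N with h | ⟨h, _⟩ <;> omega
  have ha : 1 ≤ a := by
    by_contra hc
    rw [if_neg hc] at heq
    omega
  rw [if_pos ha] at heq
  have htight1 : S.Aa a + S.Bb b = S.Sn N := by omega
  have hstr : S.Sn N = S.SW N + 1 ∧ S.Str N S.B0 := by
    rcases S.Sn_cases N with h | h
    · omega
    · exact h
  obtain ⟨_, p, m, hpm, hmB, hxp, hxm, hzint, hsm, hsp⟩ := hstr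
  -- pointwise equality m_j = n_j
  have hpw : ∀ j ∈ Finset.range S.B0,
      min (S.l1 j) a + min (S.l2 j) b = min (S.s j) N := by
    have htight : ∑ j ∈ Finset.range S.B0, (min (S.l1 j) a + min (S.l2 j) b)
        = ∑ j ∈ Finset.range S.B0, min (S.s j) N := by
      rw [← sum_m_eq]
      unfold Sn at htight1
      exact htight1
    intro j hj
    have h' := (Finset.sum_eq_sum_iff_of_le (fun i (_ : i ∈ Finset.range S.B0) =>
      S.m_le_n a b i)).mp htight j hj
    omega
  have hpwall : ∀ j, min (S.l1 j) a + min (S.l2 j) b = min (S.s j) N := by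
    intro j
    rcases Nat.lt_or_ge j S.B0 with h | h
    · exact hpw j (Finset.mem_range.mpr h)
    · have h1 := S.hL1 j (by unfold B0 at h; omega)
      have h2 := S.hL2 j (by unfold B0 at h; omega)
      unfold s
      rw [h1, h2]
      simp
  -- the threshold j*
  have hdc : ∀ j, (a ≤ S.l1 (j+1) ∧ b ≤ S.l2 (j+1)) → (a ≤ S.l1 j ∧ b ≤ S.l2 j) := by
    intro j ⟨h1, h2⟩
    exact ⟨le_trans h1 (S.anti1 (by omega)), le_trans h2 (S.anti2 (by omega))⟩
  have hnotB : ¬ (a ≤ S.l1 S.B0 ∧ b ≤ S.l2 S.B0) := by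
    intro ⟨h1, _⟩
    have := S.hL1 S.B0 (by unfold B0; omega)
    omega
  set js := ((Finset.range S.B0).filter (fun j => a ≤ S.l1 j ∧ b ≤ S.l2 j)).card with hjs
  have hQiff : ∀ j, j < js ↔ (a ≤ S.l1 j ∧ b ≤ S.l2 j) := fun j =>
    lt_dcCount_iff hdc hnotB j
  have hjsB : js ≤ S.B0 := by
    rw [hjs]
    calc ((Finset.range S.B0).filter _).card ≤ (Finset.range S.B0).card :=
      Finset.card_filter_le _ _
    _ = S.B0 := Finset.card_range _
  -- both-≤ beyond j*
  have hR : ∀ j, ¬ (j < js) → (S.l1 j ≤ a ∧ S.l2 j ≤ b) := by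
    intro j hj
    have hnq : ¬ (a ≤ S.l1 j ∧ b ≤ S.l2 j) := fun h => hj ((hQiff j).mpr h)
    have := hpwall j
    unfold s at this
    omega
  -- basic facts about p, m
  have hpe : p % 2 = 0 := ((S.xi_eq_one_iff p).mp hxp).1
  have hmo : m % 2 = 1 := ((S.xi_eq_negone_iff m).mp hxm).1
  have hTp : S.T p := ((S.xi_eq_one_iff p).mp hxp).2.1
  have hTm : S.T m := ((S.xi_eq_negone_iff m).mp hxm).2.1
  have hmdrop : S.s (m+1) < S.s m := ((S.xi_eq_negone_iff m).mp hxm).2.2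
  have hTrun : ∀ i, p ≤ i → i ≤ m → S.T i := S.run_facts hxp hzint
  -- p < j*
  have hpj : p < js := by
    apply (hQiff p).mpr
    have h1 := hpwall p
    have h2 : a + b ≤ S.s p := hsp
    unfold s at h1 h2
    omega
  -- j* ≤ m+1
  have hjm : js ≤ m + 1 := by
    by_contra hc
    have h1 := (hQiff (m+1)).mp (by omega)
    have h2 : S.s (m+1) < S.s m := hmdrop
    have h3 : S.s m ≤ N := hsm
    unfold s at h2 h3
    omega
  -- the parity case fact
  have hcase : js % 2 = 1 ∨ (a % 2 = 0 ∧ b % 2 = 1 ∧ 1 ≤ b) := by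
    rcases Nat.even_or_odd js with hje | hjo
    · right
      have hjse : js % 2 = 0 := Nat.even_iff.mp hje
      rcases Nat.lt_or_ge m js with hlt | hge
      · -- js = m+1 : s m = N and l1 m = a, l2 m = b
        have hjsm : js = m + 1 := by omega
        have hQm : a ≤ S.l1 m ∧ b ≤ S.l2 m := (hQiff m).mp (by omega)
        have heqm : S.l1 m = a ∧ S.l2 m = b := by
          have h1 := hpwall m
          have h2 : S.s m ≤ N := hsm
          unfold s at h1 h2
          omega
        obtain ⟨hTm1, hTm2⟩ := hTm
        refine ⟨by omega, by omega, by omega⟩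
      · -- js ≤ m : use the pair structure at js-1, js
        have hjs1 : 1 ≤ js := by omega
        have hio : (js - 1) % 2 = 1 := by omega
        have hseq : S.s (js - 1) = S.s (js - 1 + 1) :=
          S.run_s_eq hxp hzint hio (by omega) (by omega)
        obtain ⟨he1, he2⟩ := S.M4 hseq
        rw [show js - 1 + 1 = js by omega] at he1 he2
        have hQ1 : a ≤ S.l1 (js - 1) ∧ b ≤ S.l2 (js - 1) := (hQiff (js-1)).mp (by omega)
        have hR1 : S.l1 js ≤ a ∧ S.l2 js ≤ b := hR js (by omega)
        have hTjs : S.T js := hTrun js (by omega) hge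
        obtain ⟨hT1, hT2⟩ := hTjs
        refine ⟨by omega, by omega, by omega⟩
    · exact Or.inl (Nat.odd_iff.mp hjo)
  -- b ≥ 1 in all cases
  have hb : 1 ≤ b := by
    rcases hcase with hjo | ⟨_, _, hb1⟩
    · rcases Nat.lt_or_ge m js with hlt | hge
      · have hQm : a ≤ S.l1 m ∧ b ≤ S.l2 m := (hQiff m).mp (by omega)
        obtain ⟨_, hTm2⟩ := hTm
        omega
      · have hR1 : S.l1 js ≤ a ∧ S.l2 js ≤ b := hR js (by omega)
        have hTjs : S.T js := hTrun js (by omega) hge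
        obtain ⟨_, hT2⟩ := hTjs
        omega
    · exact hb1
  -- prefix sums parities
  have hl1even : ∀ j ∈ Finset.Ico p js, S.l1 j % 2 = 0 := by
    intro j hj
    rw [Finset.mem_Ico] at hj
    exact (hTrun j hj.1 (by omega)).1
  have hl2odd : ∀ j ∈ Finset.Ico p js, S.l2 j % 2 = 1 := by
    intro j hj
    rw [Finset.mem_Ico] at hj
    exact (hTrun j hj.1 (by omega)).2
  obtain ⟨kp, hkp⟩ : ∃ k, p = 2*k := ⟨p/2, by omega⟩
  have hpre1 : (∑ j ∈ Finset.range p, S.l1 j) % 2 = 0 := by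
    rw [hkp]; exact even_sum_pairs S.M1a kp
  have hpre2 : (∑ j ∈ Finset.range p, S.l2 j) % 2 = 0 := by
    rw [hkp]; exact even_sum_pairs S.M1b kp
  have hsplit1 : ∑ j ∈ Finset.range js, S.l1 j
      = ∑ j ∈ Finset.range p, S.l1 j + ∑ j ∈ Finset.Ico p js, S.l1 j :=
    (Finset.sum_range_add_sum_Ico _ (by omega)).symm
  have hsplit2 : ∑ j ∈ Finset.range js, S.l2 j
      = ∑ j ∈ Finset.range p, S.l2 j + ∑ j ∈ Finset.Ico p js, S.l2 j :=
    (Finset.sum_range_add_sum_Ico _ (by omega)).symm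
  have hIco1 : (∑ j ∈ Finset.Ico p js, S.l1 j) % 2 = 0 := sum_mod_two_even hl1even
  have hIco2 : (∑ j ∈ Finset.Ico p js, S.l2 j) % 2 = (js - p) % 2 := by
    rw [sum_mod_two_odd hl2odd, Nat.card_Ico]
  -- split A and B at j*
  have hAsplit : S.Aa a = a * js + ∑ j ∈ Finset.Ico js S.B0, S.l1 j := by
    unfold Aa
    rw [← Finset.sum_range_add_sum_Ico _ hjsB]
    congr 1
    · rw [Finset.sum_congr rfl (fun j hj => ?_), Finset.sum_const, Finset.card_range,
        smul_eq_mul, mul_comm]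
      rw [Finset.mem_range] at hj
      have := (hQiff j).mp hj
      omega
    · apply Finset.sum_congr rfl
      intro j hj
      rw [Finset.mem_Ico] at hj
      have := hR j (by omega)
      omega
  have hBsplit : S.Bb b = b * js + ∑ j ∈ Finset.Ico js S.B0, S.l2 j := by
    unfold Bb
    rw [← Finset.sum_range_add_sum_Ico _ hjsB]
    congr 1
    · rw [Finset.sum_congr rfl (fun j hj => ?_), Finset.sum_const, Finset.card_range,
        smul_eq_mul, mul_comm]
      rw [Finset.mem_range] at hj
      have := (hQiff j).mp hj
      omega
    · apply Finset.sum_congr rfl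
      intro j hj
      rw [Finset.mem_Ico] at hj
      have := hR j (by omega)
      omega
  -- totals
  have htot1 : ∑ j ∈ Finset.range js, S.l1 j + ∑ j ∈ Finset.Ico js S.B0, S.l1 j = S.d1 := by
    rw [Finset.sum_range_add_sum_Ico _ hjsB]
    exact partition_sum_eq S.h1 (fun j hj => S.hL1 j (by unfold B0 at hj; omega))
  have htot2 : ∑ j ∈ Finset.range js, S.l2 j + ∑ j ∈ Finset.Ico js S.B0, S.l2 j = S.d2 := by
    rw [Finset.sum_range_add_sum_Ico _ hjsB]
    exact partition_sum_eq S.h2 (fun j hj => S.hL2 j (by unfold B0 at hj; omega))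
  have hd1 := S.hd1
  have hd2 := S.hd2
  have hIco1' : (∑ j ∈ Finset.Ico js S.B0, S.l1 j) % 2 = 0 := by omega
  have hIco2' : (∑ j ∈ Finset.Ico js S.B0, S.l2 j) % 2 = (js - p) % 2 := by omega
  refine ⟨ha, hb, ?_, ?_⟩
  · rcases hcase with hc | ⟨hc1, hc2, _⟩
    · have hA2 : (a * js) % 2 = a % 2 := by rw [Nat.mul_mod, hc]; omega
      omega
    · have hA2 : (a * js) % 2 = 0 := by rw [Nat.mul_mod, hc1]; omega
      omega
  · have hB2 : (b * js) % 2 = (b % 2) * (js % 2) % 2 := Nat.mul_mod b js 2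
    rcases hcase with hc | ⟨hc1, hc2, _⟩
    · rw [hc] at hB2
      omega
    · rw [hc2] at hB2
      omega

end Stp

/-! ### transpose sum identities -/

lemma sum_min_eq_ptrans_sum {f : ℕ → ℕ} {B : ℕ} (hB : ∀ j, B ≤ j → f j = 0) (M : ℕ) :
    ∑ j ∈ Finset.range B, min (f j) M = ∑ v ∈ Finset.range M, ptrans f v := by
  rw [sum_min_eq_sum_cnt]
  exact Finset.sum_congr rfl (fun v _ => (ptrans_eq_cnt hB v).symm)

lemma prefix_eq_sum_min_ptrans {f : ℕ → ℕ} (hf : Antitone f) {B : ℕ}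
    (hB : ∀ j, B ≤ j → f j = 0) {V : ℕ} (hV : f 0 ≤ V) (a : ℕ) :
    ∑ j ∈ Finset.range a, f j = ∑ v ∈ Finset.range V, min a (ptrans f v) := by
  rw [sum_prefix_eq_sum_min_cnt hf hB hV a]
  exact Finset.sum_congr rfl (fun v _ => by rw [ptrans_eq_cnt hB])

lemma total_eq_sum_ptrans {f : ℕ → ℕ} (hf : Antitone f) {B : ℕ}
    (hB : ∀ j, B ≤ j → f j = 0) {V : ℕ} (hV : f 0 ≤ V) :
    ∑ j ∈ Finset.range B, f j = ∑ v ∈ Finset.range V, ptrans f v := by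
  rw [← sum_min_eq_ptrans_sum hB V]
  apply Finset.sum_congr rfl
  intro j _
  have : f j ≤ V := le_trans (hf (Nat.zero_le j)) hV
  omega

/-- telescoping: `cnt f v B = ∑_{k=v}^{V} pmult f k`. -/
lemma cnt_eq_sum_pmult {f : ℕ → ℕ} (hf : Antitone f) {B : ℕ} (hB : ∀ j, B ≤ j → f j = 0)
    {v : ℕ} (hv : 1 ≤ v) {V : ℕ} (hV : f 0 ≤ V) :
    cnt f v B = ∑ k ∈ Finset.Ico v (V+1), pmult f k := by
  rcases le_or_gt v (V+1) with hvV | hvV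
  swap
  · rw [Finset.Ico_eq_empty (by omega), Finset.sum_empty]
    exact cnt_eq_zero hf (by omega)
  have step : ∀ t, v + t ≤ V + 1 →
      cnt f v B = cnt f (v + t) B + ∑ k ∈ Finset.Ico v (v + t), pmult f k := by
    intro t
    induction t with
    | zero => intro _; simp
    | succ t ih =>
      intro ht
      have h1 := ih (by omega)
      obtain ⟨hpm, hle⟩ := pmult_eq_cnt_sub hf hB (v := v + t) (by omega) (B := B)
      rw [show v + (t+1) = (v + t) + 1 by omega]
      rw [Finset.sum_Ico_succ_top (by omega : v ≤ v + t)]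
      omega
  have h2 := step (V + 1 - v) (by omega)
  rw [show v + (V + 1 - v) = V + 1 by omega] at h2
  have h3 : cnt f (V+1) B = 0 := cnt_eq_zero hf (by omega)
  omega

lemma ptrans_eq_sum_pmult {f : ℕ → ℕ} (hf : Antitone f) {B : ℕ}
    (hB : ∀ j, B ≤ j → f j = 0) {V : ℕ} (hV : f 0 ≤ V) (v : ℕ) :
    ptrans f v = ∑ k ∈ Finset.Ico (v+1) (V+1), pmult f k := by
  rw [ptrans_eq_cnt hB]
  exact cnt_eq_sum_pmult hf hB (by omega) hV

/-! ### plusOne and minusOne prefix sums -/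

lemma plusOne_prefix (g : ℕ → ℕ) {N : ℕ} (hN : 1 ≤ N) :
    ∑ j ∈ Finset.range N, plusOne g j = 1 + ∑ j ∈ Finset.range N, g j := by
  obtain ⟨N', rfl⟩ : ∃ N', N = N' + 1 := ⟨N - 1, by omega⟩
  rw [Finset.sum_range_succ', Finset.sum_range_succ']
  have h1 : ∀ i, plusOne g (i + 1) = g (i + 1) := by
    intro i; unfold plusOne; simp
  rw [Finset.sum_congr rfl (fun i _ => h1 i)]
  unfold plusOne
  simp
  omega

lemma minusOne_prefix {g : ℕ → ℕ} {z : ℕ} (hz : 1 ≤ z)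
    (hpos : ∀ j, j < z → 0 < g j) (hzero : ∀ j, z ≤ j → g j = 0) (M : ℕ) :
    ∑ j ∈ Finset.range M, minusOne g j + (if z ≤ M then 1 else 0)
      = ∑ j ∈ Finset.range M, g j := by
  have hcond : ∀ j, minusOne g j = g j - (if j = z - 1 then 1 else 0) := by
    intro j
    unfold minusOne
    by_cases hj : j = z - 1
    · rw [if_pos hj, if_pos ⟨hpos j (by omega), hzero (j+1) (by omega)⟩]
    · rw [if_neg hj]
      by_cases hlt : j < z
      · rw [if_neg]
        · omega
        · intro ⟨_, hcon⟩
          have := hpos (j+1) (by omega)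
          omega
      · rw [if_neg]
        · omega
        · intro ⟨hcon, _⟩
          have := hzero j (by omega)
          omega
  rw [Finset.sum_congr rfl (fun j _ => hcond j)]
  by_cases hM : z ≤ M
  · rw [if_pos hM]
    have hsplit : ∀ j ∈ Finset.range M, g j - (if j = z-1 then 1 else 0)
        + (if j = z-1 then 1 else 0) = g j := by
      intro j hj
      have : (if j = z-1 then 1 else 0) ≤ g j := by
        by_cases h : j = z - 1
        · rw [if_pos h]; exact hpos j (by omega)
        · rw [if_neg h]; omega
      omega
    have h2 : ∑ j ∈ Finset.range M, (if j = z-1 then 1 else 0) = 1 := by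
      rw [Finset.sum_ite_eq' (Finset.range M) (z-1) (fun _ => 1)]
      rw [if_pos (Finset.mem_range.mpr (by omega))]
    calc ∑ j ∈ Finset.range M, (g j - (if j = z-1 then 1 else 0)) + 1
        = ∑ j ∈ Finset.range M, (g j - (if j = z-1 then 1 else 0))
          + ∑ j ∈ Finset.range M, (if j = z-1 then 1 else 0) := by rw [h2]
    _ = ∑ j ∈ Finset.range M, ((g j - (if j = z-1 then 1 else 0)) + (if j = z-1 then 1 else 0)) := by
        rw [← Finset.sum_add_distrib]
    _ = ∑ j ∈ Finset.range M, g j := Finset.sum_congr rfl hsplit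
  · rw [if_neg hM]
    simp only [add_zero]
    apply Finset.sum_congr rfl
    intro j hj
    rw [Finset.mem_range] at hj
    rw [if_neg (by omega)]
    omega

/-! ### union facts -/

lemma union_pt {u σ1 σ2 : ℕ → ℕ} (hu : IsUnionOf u σ1 σ2)
    (h1 : Antitone σ1) (h2 : Antitone σ2)
    {Bu : ℕ} (hBu : ∀ j, Bu ≤ j → u j = 0)
    {B1 : ℕ} (hB1 : ∀ j, B1 ≤ j → σ1 j = 0) {B2 : ℕ} (hB2 : ∀ j, B2 ≤ j → σ2 j = 0)
    (v : ℕ) : ptrans u v = ptrans σ1 v + ptrans σ2 v := by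
  set V := u 0 + σ1 0 + σ2 0 with hV
  rw [ptrans_eq_sum_pmult hu.1 hBu (by omega : u 0 ≤ V) v,
    ptrans_eq_sum_pmult h1 hB1 (by omega : σ1 0 ≤ V) v,
    ptrans_eq_sum_pmult h2 hB2 (by omega : σ2 0 ≤ V) v,
    ← Finset.sum_add_distrib]
  apply Finset.sum_congr rfl
  intro k hk
  rw [Finset.mem_Ico] at hk
  exact hu.2.2 k (by omega)

lemma union_orth {u σ1 σ2 : ℕ → ℕ} (hu : IsUnionOf u σ1 σ2)
    (ho1 : IsOrthogonal σ1) (ho2 : IsOrthogonal σ2) : IsOrthogonal u := by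
  intro k hk hke
  rw [hu.2.2 k hk]
  exact (ho1 k hk hke).add (ho2 k hk hke)

/-! ### choice of a good split for the union prefix -/

lemma min_split {x y : ℕ → ℕ} (hx : Antitone x) (hy : Antitone y) {N : ℕ} (hN : 1 ≤ N)
    {V : ℕ} (hV : ∀ v, V ≤ v → x v = 0 ∧ y v = 0) :
    ∃ a b, a + b = N ∧ ∀ v, min N (x v + y v) ≤ min a (x v) + min b (y v) := by
  classical
  by_cases hex : ∃ v, N ≤ x v + y v
  · -- largest such v
    obtain ⟨v1, hv1⟩ := hex
    have hv1V : v1 < V := by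
      by_contra hc
      have := hV v1 (by omega)
      omega
    have hne : ((Finset.range V).filter (fun v => N ≤ x v + y v)).Nonempty :=
      ⟨v1, Finset.mem_filter.mpr ⟨Finset.mem_range.mpr hv1V, hv1⟩⟩
    set u' := ((Finset.range V).filter (fun v => N ≤ x v + y v)).max' hne with hu'
    have hu'ge : N ≤ x u' + y u' := by
      have h := Finset.max'_mem _ hne
      exact (Finset.mem_filter.mp h).2
    have hu'succ : x (u'+1) + y (u'+1) < N := by
      by_contra hc
      have hmem : u' + 1 ∈ (Finset.range V).filter (fun v => N ≤ x v + y v) := by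
        rw [Finset.mem_filter]
        refine ⟨Finset.mem_range.mpr ?_, by omega⟩
        by_contra hc2
        have := hV (u'+1) (by omega)
        omega
      have := Finset.le_max' _ (u'+1) hmem
      rw [← hu'] at this
      omega
    refine ⟨max (N - y u') (x (u'+1)), N - max (N - y u') (x (u'+1)), ?_, ?_⟩
    · have h1 : x (u'+1) + y (u'+1) < N := hu'succ
      omega
    · intro v
      set a := max (N - y u') (x (u'+1)) with ha
      have hyy : y (u'+1) ≤ y u' := hy (by omega)
      have hxx : x (u'+1) ≤ x u' := hx (by omega)
      have h5 : x (u'+1) ≤ a := le_max_right _ _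
      have h6 : N - y u' ≤ a := le_max_left _ _
      have haN : a ≤ N := max_le (by omega) (by omega)
      have h7 : a ≤ N - y (u'+1) := max_le (by omega) (by omega)
      rcases le_or_gt v u' with hvu | hvu
      · have h1 : x u' ≤ x v := hx hvu
        have h2 : y u' ≤ y v := hy hvu
        have hax : a ≤ x u' := max_le (by omega) hxx
        omega
      · have h1 : x v ≤ x (u'+1) := hx hvu
        have h2 : y v ≤ y (u'+1) := hy hvu
        omega
  · push_neg at hex
    refine ⟨min (x 0) N, N - min (x 0) N, by omega, ?_⟩
    intro v
    have h1 : x v ≤ x 0 := hx (Nat.zero_le v)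
    have h2 : y v ≤ y 0 := hy (Nat.zero_le v)
    have h3 := hex 0
    have h4 := hex v
    omega

/-- prefix of a union is bounded by some split of prefixes. -/
lemma union_prefix_le {u σ1 σ2 : ℕ → ℕ} (hu : IsUnionOf u σ1 σ2)
    (h1 : Antitone σ1) (h2 : Antitone σ2)
    {Bu : ℕ} (hBu : ∀ j, Bu ≤ j → u j = 0)
    {B1 : ℕ} (hB1 : ∀ j, B1 ≤ j → σ1 j = 0) {B2 : ℕ} (hB2 : ∀ j, B2 ≤ j → σ2 j = 0)
    {N : ℕ} (hN : 1 ≤ N) :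
    ∃ a b, a + b = N ∧
      ∑ j ∈ Finset.range N, u j ≤
        ∑ j ∈ Finset.range a, σ1 j + ∑ j ∈ Finset.range b, σ2 j := by
  classical
  set V := u 0 + σ1 0 + σ2 0 + 1 with hV
  have hxa : Antitone (ptrans σ1) := ptrans_antitone' hB1
  have hya : Antitone (ptrans σ2) := ptrans_antitone' hB2
  have hVz : ∀ v, V ≤ v → ptrans σ1 v = 0 ∧ ptrans σ2 v = 0 := by
    intro v hv
    exact ⟨ptrans_zero_of_big h1 hB1 (by omega), ptrans_zero_of_big h2 hB2 (by omega)⟩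
  obtain ⟨a, b, hab, hmin⟩ := min_split hxa hya hN hVz
  refine ⟨a, b, hab, ?_⟩
  have hu0 : ∑ j ∈ Finset.range N, u j = ∑ v ∈ Finset.range V, min N (ptrans u v) :=
    prefix_eq_sum_min_ptrans hu.1 hBu (by omega) N
  have hup : ∀ v, ptrans u v = ptrans σ1 v + ptrans σ2 v :=
    union_pt hu h1 h2 hBu hB1 hB2
  calc ∑ j ∈ Finset.range N, u j = ∑ v ∈ Finset.range V, min N (ptrans u v) := hu0
  _ ≤ ∑ v ∈ Finset.range V, (min a (ptrans σ1 v) + min b (ptrans σ2 v)) := by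
      apply Finset.sum_le_sum
      intro v _
      rw [hup v]
      exact hmin v
  _ = ∑ j ∈ Finset.range a, σ1 j + ∑ j ∈ Finset.range b, σ2 j := by
      rw [Finset.sum_add_distrib,
        ← prefix_eq_sum_min_ptrans h1 hB1 (by omega : σ1 0 ≤ V) a,
        ← prefix_eq_sum_min_ptrans h2 hB2 (by omega : σ2 0 ≤ V) b]

namespace Stp

variable (S : Stp)

/-- the central split bound: any orthogonal pair dominated by `(λ1ᵗ)⁺`, `λ2ᵗ`
(expressed through the prefix bounds `hS1`, `hS2`) satisfies the split inequality. -/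
lemma key2 {σ1 σ2 : ℕ → ℕ}
    (ha1 : Antitone σ1) (ho1 : IsOrthogonal σ1) {C1 : ℕ} (hC1 : ∀ j, C1 ≤ j → σ1 j = 0)
    (ha2 : Antitone σ2) (ho2 : IsOrthogonal σ2) {C2 : ℕ} (hC2 : ∀ j, C2 ≤ j → σ2 j = 0)
    (hS1 : ∀ a, ∑ j ∈ Finset.range a, σ1 j ≤ (if 1 ≤ a then 1 else 0) + S.Aa a)
    (hS2 : ∀ b, ∑ j ∈ Finset.range b, σ2 j ≤ S.Bb b) (a b : ℕ) :
    ∑ j ∈ Finset.range a, σ1 j + ∑ j ∈ Finset.range b, σ2 j ≤ 1 + S.SW (a+b) := by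
  set N := a + b with hN
  set g : ℕ → ℕ :=
    fun t => ∑ j ∈ Finset.range t, σ1 j + ∑ j ∈ Finset.range (N - t), σ2 j with hg
  have hga : ∑ j ∈ Finset.range a, σ1 j + ∑ j ∈ Finset.range b, σ2 j = g a := by
    rw [hg]
    simp only []
    rw [show N - a = b by omega]
  rw [hga]
  -- largest maximizer via a lexicographic weight
  obtain ⟨a0, ha0mem, hfmax⟩ := Finset.exists_max_image (Finset.range (N+1))
    (fun t => (N+2) * g t + t) ⟨0, by simp⟩
  have ha0N : a0 ≤ N := by
    have := Finset.mem_range.mp ha0mem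
    omega
  have hmax : ∀ t', t' ≤ N → g t' ≤ g a0 := by
    intro t' ht'
    have h := hfmax t' (Finset.mem_range.mpr (by omega))
    by_contra hc
    have h2 : (N+2) * (g a0 + 1) ≤ (N+2) * g t' :=
      Nat.mul_le_mul_left (N+2) (by omega)
    rw [Nat.mul_add, Nat.mul_one] at h2
    omega
  have ha0max : ∀ t', t' ≤ N → g a0 ≤ g t' → t' ≤ a0 := by
    intro t' ht' hge
    have heq : g t' = g a0 := le_antisymm (hmax t' ht') hge
    have h := hfmax t' (Finset.mem_range.mpr (by omega))
    rw [heq] at h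
    omega
  have hga0 : g a ≤ g a0 := hmax a (by omega)
  suffices hfin : g a0 ≤ 1 + S.SW N by omega
  set b0 := N - a0 with hb0
  have hgeq : g a0 = ∑ j ∈ Finset.range a0, σ1 j + ∑ j ∈ Finset.range b0, σ2 j := by
    rw [hg]
  have hab0 : a0 + b0 = N := by omega
  have hLF := S.LF_main a0 b0
  rw [hab0] at hLF
  have hs1 := hS1 a0
  have hs2 := hS2 b0
  by_cases h1 : ∑ j ∈ Finset.range a0, σ1 j = (if 1 ≤ a0 then 1 else 0) + S.Aa a0
  case neg => omega
  by_cases h2 : ∑ j ∈ Finset.range b0, σ2 j = S.Bb b0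
  case neg => omega
  by_cases h3 : (if 1 ≤ a0 then 1 else 0) + S.Aa a0 + S.Bb b0 = 2 + S.SW N
  case neg => omega
  -- the tight case : use orthogonality corrections and maximality for a contradiction
  exfalso
  obtain ⟨haa, hbb, flagA, flagB⟩ := S.LF_eq a0 b0 (by rw [hab0]; exact h3)
  have horc1 : σ1 (a0 - 1) = σ1 a0 := by
    apply orth_prefix_eq ha1 ho1 hC1 haa
    rw [h1, if_pos haa]
    omega
  have horc2 : σ2 (b0 - 1) = σ2 b0 := by
    apply orth_prefix_eq ha2 ho2 hC2 hbb
    rw [h2]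
    omega
  have hA1 : ∑ j ∈ Finset.range (a0+1), σ1 j = ∑ j ∈ Finset.range a0, σ1 j + σ1 a0 :=
    Finset.sum_range_succ _ _
  have hA2 : ∑ j ∈ Finset.range a0, σ1 j
      = ∑ j ∈ Finset.range (a0-1), σ1 j + σ1 (a0-1) := by
    conv_lhs => rw [show a0 = (a0-1)+1 by omega]
    exact Finset.sum_range_succ _ _
  have hB1 : ∑ j ∈ Finset.range b0, σ2 j
      = ∑ j ∈ Finset.range (b0-1), σ2 j + σ2 (b0-1) := by
    conv_lhs => rw [show b0 = (b0-1)+1 by omega]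
    exact Finset.sum_range_succ _ _
  have hB2 : ∑ j ∈ Finset.range (b0+1), σ2 j = ∑ j ∈ Finset.range b0, σ2 j + σ2 b0 :=
    Finset.sum_range_succ _ _
  rcases le_or_gt (σ2 b0) (σ1 a0) with hxy | hxy
  · -- move right : a0+1 is also a maximizer, contradicting maximality of a0
    have hup : g a0 ≤ g (a0+1) := by
      have e1 : g (a0+1) = ∑ j ∈ Finset.range (a0+1), σ1 j
          + ∑ j ∈ Finset.range (b0-1), σ2 j := by
        rw [hg]
        simp only []
        rw [show N - (a0+1) = b0 - 1 by omega]
      rw [e1, hgeq, hA1, hB1]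
      omega
    have h2 : g a0 ≤ g (a0+1) := hup
    have h3 : g (a0+1) ≤ g a0 := hmax (a0+1) (by omega)
    have := ha0max (a0+1) (by omega) (by omega)
    omega
  · -- move left : g (a0-1) > g a0, contradicting that a0 is a maximizer
    have hup : g a0 < g (a0-1) := by
      have e1 : g (a0-1) = ∑ j ∈ Finset.range (a0-1), σ1 j
          + ∑ j ∈ Finset.range (b0+1), σ2 j := by
        rw [hg]
        simp only []
        rw [show N - (a0-1) = b0 + 1 by omega]
      rw [e1, hgeq, hA2, hB2]
      omega
    have := hmax (a0-1) (by omega)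
    omega

end Stp

/-- splitting `∑ min(f j, M)` at the threshold `ptrans f M`. -/
lemma min_prefix_split {f : ℕ → ℕ} (hf : Antitone f) {B : ℕ}
    (hB : ∀ j, B ≤ j → f j = 0) (M : ℕ) :
    ∑ j ∈ Finset.range B, min (f j) M + ∑ j ∈ Finset.range (ptrans f M), f j
      = ∑ j ∈ Finset.range B, f j + M * ptrans f M := by
  set K := ptrans f M with hK
  have hKc : K = cnt f (M+1) B := ptrans_eq_cnt hB M
  have hKB : K ≤ B := by rw [hKc]; exact cnt_le _ _ _
  have hiff : ∀ j, j < K ↔ M + 1 ≤ f j := by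
    intro j
    rw [hKc]
    exact lt_cnt_iff hf hB (by omega) j
  have h1 : ∑ j ∈ Finset.range B, min (f j) M
      = ∑ j ∈ Finset.range K, min (f j) M + ∑ j ∈ Finset.Ico K B, min (f j) M :=
    (Finset.sum_range_add_sum_Ico _ hKB).symm
  have h2 : ∑ j ∈ Finset.range K, min (f j) M = M * K := by
    have hterm : ∀ j ∈ Finset.range K, min (f j) M = M := by
      intro j hj
      rw [Finset.mem_range] at hj
      have := (hiff j).mp hj
      omega
    rw [Finset.sum_congr rfl hterm, Finset.sum_const, Finset.card_range, smul_eq_mul,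
      mul_comm]
  have h3 : ∑ j ∈ Finset.Ico K B, min (f j) M = ∑ j ∈ Finset.Ico K B, f j := by
    apply Finset.sum_congr rfl
    intro j hj
    rw [Finset.mem_Ico] at hj
    have : ¬ (j < K) := by omega
    have := (hiff j)
    omega
  have h4 : ∑ j ∈ Finset.range K, f j + ∑ j ∈ Finset.Ico K B, f j
      = ∑ j ∈ Finset.range B, f j := Finset.sum_range_add_sum_Ico _ hKB
  omega

namespace Stp

variable (S : Stp)

lemma B0_eq : S.B0 = S.L + 1 := rfl

lemma w_tail_B0 : ∀ j, S.B0 ≤ j → S.w j = 0 := by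
  intro j hj
  have := S.B0_eq
  exact S.w_zero_beyond (by omega)

lemma SW_bound (K M : ℕ) :
    S.SW K + ∑ j ∈ Finset.range M, S.w j ≤ M * K + (S.d1 + S.d2) := by
  set M' := min M S.B0 with hM'
  have hM'B : M' ≤ S.B0 := by omega
  have hprefl : ∑ j ∈ Finset.range M, S.w j = ∑ j ∈ Finset.range M', S.w j := by
    rcases le_or_gt M S.B0 with h | h
    · rw [show M' = M by omega]
    · rw [show M' = S.B0 by omega]
      exact sum_range_stable S.w_tail_B0 (by omega)
  have hsw : S.SW K = ∑ j ∈ Finset.range M', min (S.w j) K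
      + ∑ j ∈ Finset.Ico M' S.B0, min (S.w j) K := by
    unfold SW
    exact (Finset.sum_range_add_sum_Ico _ hM'B).symm
  have h2 : ∑ j ∈ Finset.range M', min (S.w j) K ≤ M' * K := by
    calc ∑ j ∈ Finset.range M', min (S.w j) K ≤ ∑ j ∈ Finset.range M', K :=
      Finset.sum_le_sum (fun j _ => by omega)
    _ = M' * K := by rw [Finset.sum_const, Finset.card_range, smul_eq_mul]
  have h3 : ∑ j ∈ Finset.Ico M' S.B0, min (S.w j) K ≤ ∑ j ∈ Finset.Ico M' S.B0, S.w j :=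
    Finset.sum_le_sum (fun j _ => by omega)
  have h4 : ∑ j ∈ Finset.range M', S.w j + ∑ j ∈ Finset.Ico M' S.B0, S.w j
      = S.d1 + S.d2 := by
    rw [Finset.sum_range_add_sum_Ico _ hM'B]
    have := S.sum_w_eq
    rw [← S.B0_eq] at this
    exact this
  have h5 : M' * K ≤ M * K := Nat.mul_le_mul_right K (by omega)
  omega

lemma SW_eq_sum_ptrans (N : ℕ) :
    S.SW N = ∑ v ∈ Finset.range N, ptrans S.w v := by
  unfold SW
  exact sum_min_eq_ptrans_sum S.w_tail_B0 N

lemma Aa_eq_sum_ptrans (a : ℕ) :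
    S.Aa a = ∑ v ∈ Finset.range a, ptrans S.l1 v := by
  unfold Aa
  apply sum_min_eq_ptrans_sum
  intro j hj
  have := S.B0_eq
  exact S.hL1 j (by omega)

lemma Bb_eq_sum_ptrans (b : ℕ) :
    S.Bb b = ∑ v ∈ Finset.range b, ptrans S.l2 v := by
  unfold Bb
  apply sum_min_eq_ptrans_sum
  intro j hj
  have := S.B0_eq
  exact S.hL2 j (by omega)

end Stp


end WaldAux

open WaldAux in

/-- type C.  `d₁, d₂` even, `d = d₁+d₂`, `λ₁` a special symplectic
partition of `d₁`, `λ₂` a special orthogonal partition of `d₂`, `W = W(λ₁,λ₂)` with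
`ε₁ = 0, ε₂ = 1`.
(i) `W` is a symplectic partition of `d`;
(ii) if `ν₁` is a B-collapse of `(λ₁ᵗ)⁺`, `ν₂` a D-collapse of `λ₂ᵗ`, `ν` a B-collapse
of `(Wᵗ)⁺`, then `ν₁ ∪ ν₂ ≤ ν`;
(iii) if moreover `η` is a C-collapse of `((ν₁ ∪ ν₂)ᵗ)⁻` then `W ≤ η`. -/
theorem stmt1 (d1 d2 : ℕ) (hd1 : Even d1) (hd2 : Even d2) (lam1 lam2 : ℕ → ℕ)
    (h1 : IsPartitionOf lam1 d1) (h1sp : IsSymplectic lam1)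
    (h1s : IsSymplectic (ptrans lam1))
    (h2 : IsPartitionOf lam2 d2) (h2o : IsOrthogonal lam2)
    (h2s : IsSymplectic (ptrans lam2)) :
    (∃ w : ℕ → ℕ, (∀ j, (w j : ℤ) = wald lam1 lam2 0 1 (d1+d2) j) ∧
        IsPartitionOf w (d1+d2) ∧ IsSymplectic w) ∧
    (∀ w : ℕ → ℕ, (∀ j, (w j : ℤ) = wald lam1 lam2 0 1 (d1+d2) j) →
      ∀ ν1 ν2 ν : ℕ → ℕ,
        IsBCollapse (d1+1) (plusOne (ptrans lam1)) ν1 →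
        IsDCollapse d2 (ptrans lam2) ν2 →
        IsBCollapse (d1+d2+1) (plusOne (ptrans w)) ν →
        ∀ u : ℕ → ℕ, IsUnionOf u ν1 ν2 →
          NDomLE u ν ∧
          ∀ η : ℕ → ℕ, IsCCollapse (d1+d2) (minusOne (ptrans u)) η →
            NDomLE w η) := by
  obtain ⟨han1, N1, hN1, hs1⟩ := h1
  obtain ⟨han2, N2, hN2, hs2⟩ := h2
  set S : Stp :=
    { l1 := lam1, l2 := lam2, d1 := d1, d2 := d2,
      hd1 := Nat.even_iff.mp hd1, hd2 := Nat.even_iff.mp hd2,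
      h1 := ⟨han1, N1, hN1, hs1⟩, h1sp := h1sp, h1s := h1s,
      h2 := ⟨han2, N2, hN2, hs2⟩, h2o := h2o, h2s := h2s,
      L := max N1 N2 + 1, hL := by omega,
      hL1 := fun j hj => hN1 j (by omega),
      hL2 := fun j hj => hN2 j (by omega) } with hS
  have hwd : ∀ j, S.wd j = wald lam1 lam2 0 1 (d1+d2) j := fun j => rfl
  constructor
  · refine ⟨S.w, fun j => by rw [S.w_cast, hwd], S.w_partition, S.w_symplectic⟩
  · intro w hw ν1 ν2 ν hν1 hν2 hν u hu
    have hwS : w = S.w := by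
      funext j
      have hcast : (w j : ℤ) = (S.w j : ℤ) := by
        rw [hw j, S.w_cast, hwd]
      exact_mod_cast hcast
    subst hwS
    obtain ⟨hν1part, hν1orth, hν1dom, _⟩ := hν1
    obtain ⟨hν2part, hν2orth, hν2dom, _⟩ := hν2
    obtain ⟨_, _, _, hνuniv⟩ := hν
    obtain ⟨hν1anti, Cν1, hCν1, hsumν1⟩ := hν1part
    obtain ⟨hν2anti, Cν2, hCν2, hsumν2⟩ := hν2part
    obtain ⟨huanti, ⟨Cu, hCu⟩, humult⟩ := hu
    have hpt1 : ptrans S.l1 = ptrans lam1 := rfl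
    have hpt2 : ptrans S.l2 = ptrans lam2 := rfl
    have hd1' : S.d1 = d1 := rfl
    have hd2' : S.d2 = d2 := rfl
    -- prefix bounds for ν1, ν2
    have hS1 : ∀ a, ∑ j ∈ Finset.range a, ν1 j ≤ (if 1 ≤ a then 1 else 0) + S.Aa a := by
      intro a
      have hd := hν1dom a
      rcases Nat.eq_zero_or_pos a with h0 | hpos
      · subst h0; simp
      · rw [plusOne_prefix _ hpos] at hd
        rw [if_pos (show 1 ≤ a by omega)]
        have h3 := S.Aa_eq_sum_ptrans a
        rw [hpt1] at h3
        omega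
    have hS2 : ∀ b, ∑ j ∈ Finset.range b, ν2 j ≤ S.Bb b := by
      intro b
      have hd := hν2dom b
      have h3 := S.Bb_eq_sum_ptrans b
      rw [hpt2] at h3
      omega
    have hkey := S.key2 hν1anti hν1orth hCν1 hν2anti hν2orth hCν2 hS1 hS2
    -- u is an orthogonal partition of d1+d2+1
    have huIsU : IsUnionOf u ν1 ν2 := ⟨huanti, ⟨Cu, hCu⟩, humult⟩
    have husum : ∑ j ∈ Finset.range Cu, u j = (d1 + 1) + d2 := by
      set V := u 0 + ν1 0 + ν2 0 + 1 with hV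
      rw [total_eq_sum_ptrans huanti hCu (by omega : u 0 ≤ V)]
      have h1' : ∑ j ∈ Finset.range Cν1, ν1 j
          = ∑ v ∈ Finset.range V, ptrans ν1 v :=
        total_eq_sum_ptrans hν1anti hCν1 (by omega : ν1 0 ≤ V)
      have h2' : ∑ j ∈ Finset.range Cν2, ν2 j
          = ∑ v ∈ Finset.range V, ptrans ν2 v :=
        total_eq_sum_ptrans hν2anti hCν2 (by omega : ν2 0 ≤ V)
      have hadd : ∀ v, ptrans u v = ptrans ν1 v + ptrans ν2 v :=
        union_pt huIsU hν1anti hν2anti hCu hCν1 hCν2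
      rw [Finset.sum_congr rfl (fun v _ => hadd v), Finset.sum_add_distrib,
        ← h1', ← h2', hsumν1, hsumν2]
    have hupart : IsPartitionOf u (d1 + d2 + 1) :=
      ⟨huanti, Cu, hCu, by rw [husum]; omega⟩
    have huorth : IsOrthogonal u := union_orth huIsU hν1orth hν2orth
    -- the (ii) core inequality
    have hSWpt : ∀ N, ∑ v ∈ Finset.range N, ptrans S.w v = S.SW N :=
      fun N => (S.SW_eq_sum_ptrans N).symm
    have hudom : NDomLE u (plusOne (ptrans S.w)) := by
      intro N
      rcases Nat.eq_zero_or_pos N with h0 | hpos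
      · subst h0; simp
      · obtain ⟨a, b, hab, hle⟩ :=
          union_prefix_le huIsU hν1anti hν2anti hCu hCν1 hCν2 hpos
        rw [plusOne_prefix _ hpos, hSWpt N]
        calc ∑ j ∈ Finset.range N, u j
            ≤ ∑ j ∈ Finset.range a, ν1 j + ∑ j ∈ Finset.range b, ν2 j := hle
        _ ≤ 1 + S.SW (a+b) := hkey a b
        _ = 1 + S.SW N := by rw [hab]
    refine ⟨hνuniv u hupart huorth hudom, ?_⟩
    -- part (iii)
    intro η hη
    obtain ⟨_, _, _, hηuniv⟩ := hη
    apply hηuniv S.w S.w_partition S.w_symplectic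
    -- NDomLE S.w (minusOne (ptrans u))
    have hz1 : 1 ≤ u 0 := by
      by_contra hc
      have hzz : ∀ j ∈ Finset.range Cu, u j = 0 := by
        intro j _
        have := huanti (Nat.zero_le j)
        omega
      rw [Finset.sum_congr rfl hzz, Finset.sum_const, smul_eq_mul, mul_zero] at husum
      omega
    have hgpos : ∀ j, j < u 0 → 0 < ptrans u j := by
      intro j hj
      rw [ptrans_eq_cnt hCu]
      have := (lt_cnt_iff huanti hCu (v := j+1) (by omega) 0).mpr (by omega)
      omega
    have hgzero : ∀ j, u 0 ≤ j → ptrans u j = 0 :=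
      fun j hj => ptrans_zero_of_big huanti hCu hj
    intro M
    have hmo := minusOne_prefix hz1 hgpos hgzero M
    rcases le_or_gt (u 0) M with hM | hM
    · -- the easy case : the full column sum
      rw [if_pos hM] at hmo
      have htotg : ∑ v ∈ Finset.range M, ptrans u v = (d1 + 1) + d2 := by
        rw [← total_eq_sum_ptrans huanti hCu (by omega : u 0 ≤ M), husum]
      have hwle : ∑ j ∈ Finset.range M, S.w j ≤ d1 + d2 :=
        partition_prefix_le S.w_partition M
      omega
    · rw [if_neg (by omega)] at hmo
      -- core inequality for (iii)
      set K1 := ptrans ν1 M with hK1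
      set K2 := ptrans ν2 M with hK2
      have he1 := min_prefix_split hν1anti hCν1 M
      have he2 := min_prefix_split hν2anti hCν2 M
      rw [hsumν1, ← hK1] at he1
      rw [hsumν2, ← hK2] at he2
      have hkk := hkey K1 K2
      have hswb := S.SW_bound (K1 + K2) M
      rw [hd1', hd2'] at hswb
      have hmul : M * (K1 + K2) = M * K1 + M * K2 := Nat.mul_add M K1 K2
      have hptu : ∑ v ∈ Finset.range M, ptrans u v
          = ∑ j ∈ Finset.range Cν1, min (ν1 j) M + ∑ j ∈ Finset.range Cν2, min (ν2 j) M := by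
        have hadd : ∀ v, ptrans u v = ptrans ν1 v + ptrans ν2 v :=
          union_pt huIsU hν1anti hν2anti hCu hCν1 hCν2
        rw [Finset.sum_congr rfl (fun v _ => hadd v), Finset.sum_add_distrib,
          sum_min_eq_ptrans_sum hCν1 M, sum_min_eq_ptrans_sum hCν2 M]
      omega
end

section
/- Let d_1, d_2 be even numbers, d = d_1+d_2, and let λ_1, λ_2 be special orthogonal partitions of d_1 and d_2 respectively. Let W = W(λ_1,λ_2) = λ_1+λ_2+ξ be the Waldspurger sequence for the type D data. Then: (i) W is an orthogonal partition of d; (ii) if ν_1 is a D-collapse of λ_1^t, ν_2 is a D-collapse of λ_2^t, and ν is a D-collapse of W^t, then ν_1 ∪ ν_2 ≤ ν in dominance order; (iii) if moreover η is a D-collapse of (ν_1 ∪ ν_2)^t, then W ≤ η in dominance order. -/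
open Finset in
theorem downclosed_eq_range (T : Finset ℕ) (h : ∀ j ∈ T, ∀ i, i ≤ j → i ∈ T) :
    T = Finset.range T.card := by
  have hsub : T ⊆ Finset.range T.card := by
    intro j hj
    have h1 : Finset.Iic j ⊆ T := fun i hi => h j hj i (Finset.mem_Iic.mp hi)
    have := Finset.card_le_card h1
    simp [Nat.card_Iic] at this
    simp only [Finset.mem_range]; omega
  exact Finset.eq_of_subset_of_card_le hsub (by simp)

theorem pt_card (f : ℕ → ℕ) (B : ℕ) (hB : ∀ j, B ≤ j → f j = 0) (m : ℕ) :
    ptrans f m = ((Finset.range B).filter (fun j => m + 1 ≤ f j)).card := by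
  have hset : {j : ℕ | m + 1 ≤ f j} =
      ↑((Finset.range B).filter (fun j => m + 1 ≤ f j)) := by
    ext j
    simp only [Set.mem_setOf_eq, Finset.coe_filter, Finset.mem_range, Set.mem_setOf_eq]
    constructor
    · intro hj
      refine ⟨?_, hj⟩
      by_contra hc
      have := hB j (by omega)
      omega
    · tauto
  show Nat.card {j : ℕ // m + 1 ≤ f j} = _
  have : Nat.card {j : ℕ // m + 1 ≤ f j} = Nat.card {j : ℕ | m + 1 ≤ f j} := rfl
  rw [this, Nat.card_coe_set_eq {j : ℕ | m + 1 ≤ f j}, hset, Set.ncard_coe_finset]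

theorem pt_iff (f : ℕ → ℕ) (hf : Antitone f) (B : ℕ) (hB : ∀ j, B ≤ j → f j = 0)
    (m j : ℕ) : m + 1 ≤ f j ↔ j < ptrans f m := by
  rw [pt_card f B hB m]
  set T := (Finset.range B).filter (fun j => m + 1 ≤ f j) with hT
  have hdc : ∀ j ∈ T, ∀ i, i ≤ j → i ∈ T := by
    intro j hj i hij
    simp only [hT, Finset.mem_filter, Finset.mem_range] at hj ⊢
    exact ⟨by omega, le_trans hj.2 (hf hij)⟩
  have := downclosed_eq_range T hdc
  constructor
  · intro hj
    have hjT : j ∈ T := by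
      simp only [hT, Finset.mem_filter, Finset.mem_range]
      refine ⟨?_, hj⟩
      by_contra hc; have := hB j (by omega); omega
    rw [this] at hjT; simpa using hjT
  · intro hj
    have : j ∈ T := by rw [this]; simpa using hj
    simp only [hT, Finset.mem_filter] at this; exact this.2

theorem pt_anti (f : ℕ → ℕ) (hf : Antitone f) (B : ℕ) (hB : ∀ j, B ≤ j → f j = 0) :
    Antitone (ptrans f) := by
  intro m m' h
  by_contra hc
  push_neg at hc
  have h1 : ptrans f m' - 1 < ptrans f m' := by omega
  have h2 := (pt_iff f hf B hB m' (ptrans f m' - 1)).mpr h1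
  have h3 : m + 1 ≤ f (ptrans f m' - 1) := by omega
  have := (pt_iff f hf B hB m (ptrans f m' - 1)).mp h3
  omega

theorem pt_supp (f : ℕ → ℕ) (hf : Antitone f) (B : ℕ) (hB : ∀ j, B ≤ j → f j = 0)
    (m : ℕ) (hm : f 0 ≤ m) : ptrans f m = 0 := by
  by_contra hc
  have : 0 < ptrans f m := by omega
  have := (pt_iff f hf B hB m 0).mpr this
  have := hf (Nat.zero_le 0)
  omega

theorem pt_le (f : ℕ → ℕ) (B : ℕ) (hB : ∀ j, B ≤ j → f j = 0) (m : ℕ) :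
    ptrans f m ≤ B := by
  rw [pt_card f B hB m]
  exact le_trans (Finset.card_filter_le _ _) (by simp)

theorem pt_sum (f : ℕ → ℕ) (B : ℕ) (hB : ∀ j, B ≤ j → f j = 0) (K : ℕ) :
    ∑ k ∈ Finset.range K, ptrans f k = ∑ j ∈ Finset.range B, min (f j) K := by
  have h1 : ∀ k, ptrans f k = ∑ j ∈ Finset.range B, if k + 1 ≤ f j then 1 else 0 := by
    intro k; rw [pt_card f B hB k, Finset.card_filter]
  calc ∑ k ∈ Finset.range K, ptrans f k
      = ∑ k ∈ Finset.range K, ∑ j ∈ Finset.range B, if k + 1 ≤ f j then 1 else 0 := by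
        exact Finset.sum_congr rfl (fun k _ => h1 k)
    _ = ∑ j ∈ Finset.range B, ∑ k ∈ Finset.range K, if k + 1 ≤ f j then 1 else 0 :=
        Finset.sum_comm
    _ = ∑ j ∈ Finset.range B, min (f j) K := by
        refine Finset.sum_congr rfl (fun j _ => ?_)
        rw [← Finset.card_filter]
        have : (Finset.range K).filter (fun k => k + 1 ≤ f j) = Finset.range (min (f j) K) := by
          ext k; simp only [Finset.mem_filter, Finset.mem_range]; omega
        rw [this, Finset.card_range]

theorem sum_stab (f : ℕ → ℕ) (B : ℕ) (hB : ∀ j, B ≤ j → f j = 0) (M : ℕ) (hM : B ≤ M) :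
    ∑ j ∈ Finset.range M, f j = ∑ j ∈ Finset.range B, f j := by
  rw [Finset.range_eq_Ico, ← Finset.sum_Ico_consecutive _ (Nat.zero_le B) hM]
  have : ∑ j ∈ Finset.Ico B M, f j = 0 := by
    apply Finset.sum_eq_zero
    intro j hj; exact hB j (Finset.mem_Ico.mp hj).1
  rw [this, ← Finset.range_eq_Ico]; omega

theorem pt_total (f : ℕ → ℕ) (hf : Antitone f) (B : ℕ) (hB : ∀ j, B ≤ j → f j = 0)
    (K : ℕ) (hK : f 0 ≤ K) :
    ∑ k ∈ Finset.range K, ptrans f k = ∑ j ∈ Finset.range B, f j := by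
  rw [pt_sum f B hB K]
  refine Finset.sum_congr rfl (fun j _ => ?_)
  have : f j ≤ f 0 := hf (Nat.zero_le j)
  omega

theorem sum_split (h : ℕ → ℕ) (K M : ℕ) (hKM : K ≤ M) :
    ∑ j ∈ Finset.range M, h j = ∑ j ∈ Finset.range K, h j + ∑ j ∈ Finset.Ico K M, h j :=
  (Finset.sum_range_add_sum_Ico h hKM).symm

theorem pt_pt (f : ℕ → ℕ) (hf : Antitone f) (B : ℕ) (hB : ∀ j, B ≤ j → f j = 0) (j : ℕ) :
    ptrans (ptrans f) j = f j := by
  have hptB : ∀ k, f 0 ≤ k → ptrans f k = 0 := fun k hk => pt_supp f hf B hB k hk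
  have hpa : Antitone (ptrans f) := pt_anti f hf B hB
  have key : ∀ x, x < ptrans (ptrans f) j ↔ x < f j := by
    intro x
    rw [← pt_iff (ptrans f) hpa (f 0) hptB j x]
    constructor
    · intro h
      have h2 : j < ptrans f x := by omega
      exact (pt_iff f hf B hB x j).mpr h2
    · intro h
      have := (pt_iff f hf B hB x j).mp h
      omega
  have h1 := key (f j)
  have h2 := key (ptrans (ptrans f) j)
  omega

theorem pmult_mem (f : ℕ → ℕ) (hf : Antitone f) (B : ℕ) (hB : ∀ j, B ≤ j → f j = 0)
    (c j : ℕ) : f j = c + 1 ↔ ptrans f (c + 1) ≤ j ∧ j < ptrans f c := by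
  have h1 := pt_iff f hf B hB c j
  have h2 := pt_iff f hf B hB (c + 1) j
  omega

theorem pmult_eq (f : ℕ → ℕ) (hf : Antitone f) (B : ℕ) (hB : ∀ j, B ≤ j → f j = 0)
    (c : ℕ) : pmult f (c + 1) = ptrans f c - ptrans f (c + 1) := by
  have hset : {j : ℕ | f j = c + 1} = ↑(Finset.Ico (ptrans f (c + 1)) (ptrans f c)) := by
    ext j
    simp only [Set.mem_setOf_eq, Finset.coe_Ico, Set.mem_Ico]
    exact pmult_mem f hf B hB c j
  show Nat.card {j : ℕ // f j = c + 1} = _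
  have : Nat.card {j : ℕ // f j = c + 1} = Nat.card {j : ℕ | f j = c + 1} := rfl
  rw [this, Nat.card_coe_set_eq, hset, Set.ncard_coe_finset, Nat.card_Ico]

theorem pt_partition (f : ℕ → ℕ) (d : ℕ) (hf : IsPartitionOf f d) :
    IsPartitionOf (ptrans f) d := by
  obtain ⟨ha, B, hB, hsum⟩ := hf
  refine ⟨pt_anti f ha B hB, f 0, fun k hk => pt_supp f ha B hB k hk, ?_⟩
  rw [pt_total f ha B hB (f 0) le_rfl, hsum]

theorem dom_dual (x y : ℕ → ℕ) (d : ℕ) (hx : IsPartitionOf x d) (hy : IsPartitionOf y d)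
    (h : NDomLE x (ptrans y)) : NDomLE y (ptrans x) := by
  obtain ⟨hax, Bx, hBx, hsx⟩ := hx
  obtain ⟨hay, By, hBy, hsy⟩ := hy
  intro K
  set t := ptrans x K with ht
  set By' := max By K with hBy'
  -- e2 pieces
  have htBx : t ≤ Bx := pt_le x Bx hBx K
  have hxK : ∀ j, j < t → K + 1 ≤ x j := fun j hj => (pt_iff x hax Bx hBx K j).mpr hj
  have hxK' : ∀ j, t ≤ j → x j ≤ K := by
    intro j hj
    by_contra hc
    have := (pt_iff x hax Bx hBx K j).mp (by omega)
    omega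
  have e2 : ∑ j ∈ Finset.range Bx, (x j - K) + t * K = ∑ j ∈ Finset.range t, x j := by
    have hsplit : ∑ j ∈ Finset.range Bx, (x j - K)
        = ∑ j ∈ Finset.range t, (x j - K) := by
      rw [Finset.range_eq_Ico, ← Finset.sum_Ico_consecutive _ (Nat.zero_le t) htBx]
      have : ∑ j ∈ Finset.Ico t Bx, (x j - K) = 0 := by
        apply Finset.sum_eq_zero
        intro j hj
        have := hxK' j (Finset.mem_Ico.mp hj).1
        omega
      rw [this, ← Finset.range_eq_Ico]; omega
    rw [hsplit]
    have : ∑ j ∈ Finset.range t, (x j - K) + t * K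
        = ∑ j ∈ Finset.range t, ((x j - K) + K) := by
      rw [Finset.sum_add_distrib, Finset.sum_const, Finset.card_range, smul_eq_mul]
    rw [this]
    exact Finset.sum_congr rfl (fun j hj => by
      have := hxK j (Finset.mem_range.mp hj); omega)
  -- e1
  have e1 : ∑ j ∈ Finset.range Bx, min (x j) K + ∑ j ∈ Finset.range Bx, (x j - K) = d := by
    rw [← Finset.sum_add_distrib]
    rw [← hsx]
    exact Finset.sum_congr rfl (fun j _ => by omega)
  -- e3
  have e3 : ∑ j ∈ Finset.range K, y j + ∑ j ∈ Finset.Ico K By', y j = d := by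
    rw [← sum_split y K By' (le_max_right By K)]
    rw [sum_stab y By hBy By' (le_max_left By K), hsy]
  -- i4
  have i4 : ∑ j ∈ Finset.range t, x j ≤ t * K + ∑ j ∈ Finset.Ico K By', y j := by
    calc ∑ j ∈ Finset.range t, x j ≤ ∑ k ∈ Finset.range t, ptrans y k := h t
      _ = ∑ j ∈ Finset.range By, min (y j) t := pt_sum y By hBy t
      _ = ∑ j ∈ Finset.range By', min (y j) t := by
          rw [sum_split (fun j => min (y j) t) By By' (le_max_left By K)]
          have hz : ∑ j ∈ Finset.Ico By By', min (y j) t = 0 := by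
            apply Finset.sum_eq_zero
            intro j hj
            rw [hBy j (Finset.mem_Ico.mp hj).1]; simp
          omega
      _ = ∑ j ∈ Finset.range K, min (y j) t + ∑ j ∈ Finset.Ico K By', min (y j) t :=
          sum_split (fun j => min (y j) t) K By' (le_max_right By K)
      _ ≤ t * K + ∑ j ∈ Finset.Ico K By', y j := by
          gcongr with j hj
          · calc ∑ j ∈ Finset.range K, min (y j) t ≤ ∑ _j ∈ Finset.range K, t :=
                Finset.sum_le_sum (fun j _ => min_le_right _ _)
              _ = K * t := by rw [Finset.sum_const, Finset.card_range, smul_eq_mul]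
              _ = t * K := Nat.mul_comm K t
          · exact min_le_left _ _
  -- assemble
  have hgoal : ∑ j ∈ Finset.range K, y j ≤ ∑ j ∈ Finset.range Bx, min (x j) K := by omega
  calc ∑ j ∈ Finset.range K, y j ≤ ∑ j ∈ Finset.range Bx, min (x j) K := hgoal
    _ = ∑ k ∈ Finset.range K, ptrans x k := (pt_sum x Bx hBx K).symm

theorem pairP_of_symp (f : ℕ → ℕ) (hf : Antitone f) (B : ℕ) (hB : ∀ j, B ≤ j → f j = 0)
    (hs : IsSymplectic (ptrans f)) : ∀ i, i % 2 = 0 → f i % 2 = f (i + 1) % 2 := by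
  intro i hi
  have hodd : Odd (i + 1) := by rw [Nat.odd_iff]; omega
  have he := hs (i + 1) (by omega) hodd
  have hpa : Antitone (ptrans f) := pt_anti f hf B hB
  have hptB : ∀ k, f 0 ≤ k → ptrans f k = 0 := fun k hk => pt_supp f hf B hB k hk
  have hpm := pmult_eq (ptrans f) hpa (f 0) hptB i
  rw [pt_pt f hf B hB i, pt_pt f hf B hB (i + 1)] at hpm
  rw [hpm] at he
  have hle : f (i + 1) ≤ f i := hf (by omega)
  rcases he with ⟨r, hr⟩
  omega

theorem ptpair_of_orth (ν : ℕ → ℕ) (hν : Antitone ν) (B : ℕ) (hB : ∀ j, B ≤ j → ν j = 0)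
    (ho : IsOrthogonal ν) : ∀ i, i % 2 = 1 → ptrans ν i % 2 = ptrans ν (i + 1) % 2 := by
  intro i hi
  have hev : Even (i + 1) := by rw [Nat.even_iff]; omega
  have he := ho (i + 1) (by omega) hev
  rw [pmult_eq ν hν B hB i] at he
  have hle : ptrans ν (i + 1) ≤ ptrans ν i := pt_anti ν hν B hB (by omega)
  rcases he with ⟨r, hr⟩
  omega

theorem evenblock (f : ℕ → ℕ) (hf : Antitone f) (B : ℕ) (hB : ∀ j, B ≤ j → f j = 0)
    (hpp : ∀ i, i % 2 = 0 → f i % 2 = f (i + 1) % 2) (ho : IsOrthogonal f) :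
    ∀ j, j % 2 = 0 → f j % 2 = 0 → f (j + 1) = f j := by
  intro j
  induction j using Nat.strong_induction_on with
  | _ j ih =>
    intro hj heven
    rcases Nat.eq_zero_or_pos (f j) with h0 | h0
    · have : f (j + 1) ≤ f j := hf (by omega : j ≤ j + 1)
      omega
    · obtain ⟨m, hm⟩ : ∃ m, f j = m + 1 := ⟨f j - 1, by omega⟩
      have hmem := (pmult_mem f hf B hB m j).mp hm
      have hmult : pmult f (m + 1) = ptrans f m - ptrans f (m + 1) := pmult_eq f hf B hB m
      have hevenmult : Even (pmult f (m + 1)) := by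
        apply ho (m + 1) (by omega)
        rw [Nat.even_iff]; omega
      have hle : ptrans f (m + 1) ≤ ptrans f m := pt_anti f hf B hB (by omega)
      -- a := ptrans f (m+1) is even
      have ha : ptrans f (m + 1) % 2 = 0 := by
        by_contra hc
        have ha1 : 1 ≤ ptrans f (m + 1) := by omega
        have hfa1 : m + 2 ≤ f (ptrans f (m + 1) - 1) := by
          have := (pt_iff f hf B hB (m + 1) (ptrans f (m + 1) - 1)).mpr (by omega)
          omega
        have hfa : f (ptrans f (m + 1)) = m + 1 := by
          apply (pmult_mem f hf B hB m (ptrans f (m + 1))).mpr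
          omega
        have heq : ptrans f (m + 1) - 1 + 1 = ptrans f (m + 1) := by omega
        have hpar := hpp (ptrans f (m + 1) - 1) (by omega)
        rw [heq, hfa] at hpar
        have hge : f (ptrans f (m + 1) - 1) % 2 = 0 := by omega
        have hih := ih (ptrans f (m + 1) - 1) (by omega) (by omega) hge
        rw [heq] at hih
        omega
      -- now j+1 < ptrans f m
      rcases hevenmult with ⟨r, hr⟩
      rw [hm]
      apply (pmult_mem f hf B hB m (j + 1)).mpr
      constructor
      · omega
      · omega

theorem pt_telescope (x : ℕ → ℕ) (hx : Antitone x) (B : ℕ) (hB : ∀ j, B ≤ j → x j = 0) :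
    ∀ T k, k ≤ T → ptrans x k = ∑ m ∈ Finset.Ico k T, pmult x (m + 1) + ptrans x T := by
  intro T
  induction T with
  | zero => intro k hk; simp [Nat.le_zero.mp hk]
  | succ T ihT =>
    intro k hk
    rcases Nat.eq_or_lt_of_le hk with he | hlt
    · rw [he]; simp
    · have hkT : k ≤ T := by omega
      rw [Finset.sum_Ico_succ_top hkT, ihT k hkT, pmult_eq x hx B hB T]
      have := pt_anti x hx B hB (by omega : T ≤ T + 1)
      omega

theorem pt_union (u ν1 ν2 : ℕ → ℕ) (hu : Antitone u) (Bu : ℕ) (hBu : ∀ j, Bu ≤ j → u j = 0)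
    (h1 : Antitone ν1) (B1 : ℕ) (hB1 : ∀ j, B1 ≤ j → ν1 j = 0)
    (h2 : Antitone ν2) (B2 : ℕ) (hB2 : ∀ j, B2 ≤ j → ν2 j = 0)
    (hm : ∀ k, 0 < k → pmult u k = pmult ν1 k + pmult ν2 k) (k : ℕ) :
    ptrans u k = ptrans ν1 k + ptrans ν2 k := by
  set T := max k (max (u 0) (max (ν1 0) (ν2 0))) with hT
  have hTk : k ≤ T := le_max_left _ _
  have e0 : ptrans u T = 0 := pt_supp u hu Bu hBu T (by omega)
  have e1 : ptrans ν1 T = 0 := pt_supp ν1 h1 B1 hB1 T (by omega)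
  have e2 : ptrans ν2 T = 0 := pt_supp ν2 h2 B2 hB2 T (by omega)
  have t0 := pt_telescope u hu Bu hBu T k hTk
  have t1 := pt_telescope ν1 h1 B1 hB1 T k hTk
  have t2 := pt_telescope ν2 h2 B2 hB2 T k hTk
  rw [e0] at t0; rw [e1] at t1; rw [e2] at t2
  rw [t0, t1, t2]
  simp only [add_zero]
  rw [← Finset.sum_add_distrib]
  apply Finset.sum_congr rfl
  intro m _
  exact hm (m + 1) (by omega)

theorem pair_sum (h : ℕ → ℕ) (N : ℕ) :
    ∀ K, ∑ i ∈ Finset.Ico N (N + 2 * K), h i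
      = ∑ m ∈ Finset.range K, (h (N + 2 * m) + h (N + 2 * m + 1)) := by
  intro K
  induction K with
  | zero => simp
  | succ K ihK =>
    have he : N + 2 * (K + 1) = N + 2 * K + 1 + 1 := by ring
    rw [he, Finset.sum_Ico_succ_top (by omega), Finset.sum_Ico_succ_top (by omega), ihK,
      Finset.sum_range_succ]
    omega

theorem paircard (S : Finset ℕ) (h : ∀ t, 2 * t ∈ S ↔ 2 * t + 1 ∈ S) : S.card % 2 = 0 := by
  classical
  set E := S.filter (fun j => j % 2 = 0) with hE
  set O := S.filter (fun j => j % 2 = 1) with hO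
  have hcard : E.card = O.card := by
    apply Finset.card_nbij' (fun a => a + 1) (fun b => b - 1)
    · intro a ha
      simp only [hE, Finset.mem_coe, Finset.mem_filter] at ha
      simp only [hO, Finset.mem_coe, Finset.mem_filter]
      obtain ⟨t, ht⟩ : ∃ t, a = 2 * t := ⟨a / 2, by omega⟩
      refine ⟨?_, by omega⟩
      rw [ht] at ha ⊢
      exact (h t).mp ha.1
    · intro b hb
      simp only [hO, Finset.mem_coe, Finset.mem_filter] at hb
      simp only [hE, Finset.mem_coe, Finset.mem_filter]
      obtain ⟨t, ht⟩ : ∃ t, b = 2 * t + 1 := ⟨b / 2, by omega⟩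
      refine ⟨?_, by omega⟩
      have : b - 1 = 2 * t := by omega
      rw [this]
      exact (h t).mpr (by rw [← ht]; exact hb.1)
    · intro a ha; dsimp only; omega
    · intro b hb
      simp only [hO, Finset.mem_coe, Finset.mem_filter] at hb
      dsimp only; omega
  have hsplit : E.card + O.card = S.card := by
    rw [hE, hO]
    have : S.filter (fun j => j % 2 = 1) = S.filter (fun j => ¬ (j % 2 = 0)) := by
      apply Finset.filter_congr
      intro j _; omega
    rw [this]
    exact Finset.card_filter_add_card_filter_not _
  omega

/-- Both parts odd at index `j`. -/
def Pboth (f g : ℕ → ℕ) (j : ℕ) : Prop := f j % 2 = 1 ∧ g j % 2 = 1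

/-- State reached after an unmatched `+1` in the `ξ`-sequence. -/
def Qone (f g : ℕ → ℕ) (N : ℕ) : Prop :=
  ∃ j, j < N ∧ j % 2 = 0 ∧ (∀ i, j ≤ i → i ≤ N → Pboth f g i) ∧
    (∀ i, i % 2 = 1 → j < i → i + 1 ≤ N → f i = f (i + 1) ∧ g i = g (i + 1))

theorem xi_one_iff (f g : ℕ → ℕ) (d : ℕ) (hd : d % 2 = 0) (j : ℕ) :
    xiSeq f g 1 1 d j = 1 ↔ (j % 2 = 0 ∧ f j % 2 = 1 ∧ g j % 2 = 1 ∧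
      (j = 0 ∨ f j + g j < f (j - 1) + g (j - 1))) := by
  unfold xiSeq
  split_ifs with h1 h2
  · exact iff_of_true rfl ⟨by omega, h1.2.1, h1.2.2.1, h1.2.2.2⟩
  · refine iff_of_false (by norm_num) ?_
    rintro ⟨ha, hb, hc, hdd⟩
    exact h1 ⟨by omega, hb, hc, hdd⟩
  · refine iff_of_false (by norm_num) ?_
    rintro ⟨ha, hb, hc, hdd⟩
    exact h1 ⟨by omega, hb, hc, hdd⟩

theorem xi_neg_iff (f g : ℕ → ℕ) (d : ℕ) (hd : d % 2 = 0) (j : ℕ) :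
    xiSeq f g 1 1 d j = -1 ↔ (j % 2 = 1 ∧ f j % 2 = 1 ∧ g j % 2 = 1 ∧
      f (j + 1) + g (j + 1) < f j + g j) := by
  unfold xiSeq
  split_ifs with h1 h2
  · refine iff_of_false (by norm_num) ?_
    rintro ⟨ha, hb, hc, hdd⟩
    omega
  · exact iff_of_true rfl ⟨by omega, h2.2.1, h2.2.2.1, h2.2.2.2⟩
  · refine iff_of_false (by norm_num) ?_
    rintro ⟨ha, hb, hc, hdd⟩
    exact h2 ⟨by omega, hb, hc, hdd⟩

theorem xi_cases (f g : ℕ → ℕ) (d : ℕ) (j : ℕ) :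
    xiSeq f g 1 1 d j = 1 ∨ xiSeq f g 1 1 d j = -1 ∨ xiSeq f g 1 1 d j = 0 := by
  unfold xiSeq
  split_ifs <;> simp

theorem xi_invariant (f g : ℕ → ℕ) (hf : Antitone f) (hg : Antitone g) (d : ℕ)
    (hd : d % 2 = 0)
    (hfp : ∀ i, i % 2 = 0 → f i % 2 = f (i + 1) % 2)
    (hgp : ∀ i, i % 2 = 0 → g i % 2 = g (i + 1) % 2) :
    ∀ N, (∑ j ∈ Finset.range N, xiSeq f g 1 1 d j = 0 ∧ (N % 2 = 1 → ¬ Pboth f g N)) ∨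
      (∑ j ∈ Finset.range N, xiSeq f g 1 1 d j = 1 ∧ Qone f g N) := by
  intro N
  induction N using Nat.strong_induction_on with
  | _ N ih =>
    match N with
    | 0 => left; simp
    | N + 1 =>
      have IH := ih N (by omega)
      have hstep := Finset.sum_range_succ (xiSeq f g 1 1 d) N
      have h3 := xi_cases f g d N
      rcases IH with ⟨hS0, hP0⟩ | ⟨hS1, j, hjN, hje, hPr, hpr⟩
      · rcases h3 with h1 | hneg | h0
        · -- +1 : move to state 1
          obtain ⟨hNe, hfN, hgN, hdrop⟩ := (xi_one_iff f g d hd N).mp h1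
          right
          refine ⟨by rw [hstep, hS0, h1]; ring, N, by omega, hNe, ?_, ?_⟩
          · intro i hi1 hi2
            have : i = N ∨ i = N + 1 := by omega
            rcases this with h | h <;> subst h
            · exact ⟨hfN, hgN⟩
            · have e1 := hfp N hNe
              have e2 := hgp N hNe
              exact ⟨by omega, by omega⟩
          · intro i _ hi1 hi2; omega
        · -- −1 from state 0 : impossible
          obtain ⟨hNo, hfN, hgN, _⟩ := (xi_neg_iff f g d hd N).mp hneg
          exact absurd ⟨hfN, hgN⟩ (hP0 hNo)
        · -- 0 : stay in state 0
          left
          refine ⟨by rw [hstep, hS0, h0]; ring, ?_⟩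
          intro hN1 hPN1
          have hNe : N % 2 = 0 := by omega
          have e1 := hfp N hNe
          have e2 := hgp N hNe
          have hPN : Pboth f g N := ⟨by have := hPN1.1; omega, by have := hPN1.2; omega⟩
          have hnot : ¬ (N = 0 ∨ f N + g N < f (N - 1) + g (N - 1)) := by
            intro hcon
            have := (xi_one_iff f g d hd N).mpr ⟨hNe, hPN.1, hPN.2, hcon⟩
            omega
          push_neg at hnot
          obtain ⟨hN0, hge⟩ := hnot
          have hf1 : f (N - 1) ≥ f N := hf (by omega)
          have hg1 : g (N - 1) ≥ g N := hg (by omega)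
          have hfe : f (N - 1) = f N := by omega
          have hge' : g (N - 1) = g N := by omega
          have hPN1' : Pboth f g (N - 1) := ⟨by rw [hfe]; exact hPN.1, by rw [hge']; exact hPN.2⟩
          have hodd1 : (N - 1) % 2 = 1 := by omega
          have IH2 := ih (N - 1) (by omega)
          rcases IH2 with ⟨hS0', hP0'⟩ | ⟨hS1', _⟩
          · exact hP0' hodd1 hPN1'
          · -- ξ (N-1) = 0, so S N = 1, contradiction
            have hxiz : xiSeq f g 1 1 d (N - 1) = 0 := by
              rcases xi_cases f g d (N - 1) with ha | hb | hc
              · have := (xi_one_iff f g d hd (N - 1)).mp ha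
                omega
              · obtain ⟨_, _, _, hdr⟩ := (xi_neg_iff f g d hd (N - 1)).mp hb
                rw [show N - 1 + 1 = N from by omega] at hdr
                omega
              · exact hc
            have hstep2 := Finset.sum_range_succ (xiSeq f g 1 1 d) (N - 1)
            rw [show N - 1 + 1 = N from by omega] at hstep2
            rw [hstep2, hS1', hxiz] at hS0
            omega
      · rcases h3 with h1 | hneg | h0
        · -- +1 from state 1 : impossible
          exfalso
          obtain ⟨hNe, hfN, hgN, hdrop⟩ := (xi_one_iff f g d hd N).mp h1
          have hN2 : 2 ≤ N := by omega
          have hpp := hpr (N - 1) (by omega) (by omega) (by omega)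
          rw [show N - 1 + 1 = N from by omega] at hpp
          rcases hdrop with h | h
          · omega
          · omega
        · -- −1 : back to state 0
          left
          obtain ⟨hNo, _, _, _⟩ := (xi_neg_iff f g d hd N).mp hneg
          refine ⟨by rw [hstep, hS1, hneg]; ring, ?_⟩
          intro h; omega
        · -- 0 : stay in state 1
          right
          refine ⟨by rw [hstep, hS1, h0]; ring, j, by omega, hje, ?_, ?_⟩
          · intro i hi1 hi2
            rcases Nat.lt_or_ge i (N + 1) with h | h
            · exact hPr i hi1 (by omega)
            · have hiN : i = N + 1 := by omega
              subst hiN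
              have hPN : Pboth f g N := hPr N (by omega) (by omega)
              rcases Nat.even_or_odd N with hNe | hNo
              · have hNe' : N % 2 = 0 := Nat.even_iff.mp hNe
                have e1 := hfp N hNe'
                have e2 := hgp N hNe'
                exact ⟨by have := hPN.1; omega, by have := hPN.2; omega⟩
              · have hNo' : N % 2 = 1 := Nat.odd_iff.mp hNo
                have hnd : ¬ (f (N + 1) + g (N + 1) < f N + g N) := by
                  intro hcon
                  have := (xi_neg_iff f g d hd N).mpr ⟨hNo', hPN.1, hPN.2, hcon⟩
                  omega
                have hf1 : f (N + 1) ≤ f N := hf (by omega)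
                have hg1 : g (N + 1) ≤ g N := hg (by omega)
                have hfe : f (N + 1) = f N := by omega
                have hge' : g (N + 1) = g N := by omega
                exact ⟨by rw [hfe]; exact hPN.1, by rw [hge']; exact hPN.2⟩
          · intro i hio hi1 hi2
            rcases Nat.lt_or_ge (i + 1) (N + 1) with h | h
            · exact hpr i hio hi1 (by omega)
            · have hiN : i = N := by omega
              subst hiN
              have hPN : Pboth f g i := hPr i (by omega) (by omega)
              have hnd : ¬ (f (i + 1) + g (i + 1) < f i + g i) := by
                intro hcon
                have := (xi_neg_iff f g d hd i).mpr ⟨hio, hPN.1, hPN.2, hcon⟩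
                omega
              have hf1 : f (i + 1) ≤ f i := hf (by omega)
              have hg1 : g (i + 1) ≤ g i := hg (by omega)
              exact ⟨by omega, by omega⟩

theorem sum_parity_pairs (h : ℕ → ℕ) (a K : ℕ)
    (hpar : ∀ m, m < K → (h (a + 2 * m) + h (a + 2 * m + 1)) % 2 = 0) :
    (∑ i ∈ Finset.Ico a (a + 2 * K), h i) % 2 = 0 := by
  rw [pair_sum h a K, Finset.sum_nat_mod]
  have h0 : ∑ m ∈ Finset.range K, (h (a + 2 * m) + h (a + 2 * m + 1)) % 2 = 0 :=
    Finset.sum_eq_zero (fun m hm => hpar m (Finset.mem_range.mp hm))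
  rw [h0]

theorem sum_parity_const (h : ℕ → ℕ) (a b : ℕ)
    (hall : ∀ i, a ≤ i → i < b → h i % 2 = 1) :
    (∑ i ∈ Finset.Ico a b, h i) % 2 = (b - a) % 2 := by
  rw [Finset.sum_nat_mod]
  have h1 : ∑ i ∈ Finset.Ico a b, h i % 2 = ∑ i ∈ Finset.Ico a b, 1 := by
    apply Finset.sum_congr rfl
    intro i hi
    rw [Finset.mem_Ico] at hi
    exact hall i hi.1 hi.2
  rw [h1, Finset.sum_const, Nat.card_Ico, smul_eq_mul, mul_one]

theorem even_prefix (f : ℕ → ℕ) (hfp : ∀ i, i % 2 = 0 → f i % 2 = f (i + 1) % 2)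
    (j : ℕ) (hje : j % 2 = 0) : (∑ i ∈ Finset.range j, f i) % 2 = 0 := by
  have h1 : (∑ i ∈ Finset.Ico 0 (0 + 2 * (j / 2)), f i) % 2 = 0 := by
    apply sum_parity_pairs
    intro m _
    have := hfp (0 + 2 * m) (by omega)
    omega
  rw [show (0 : ℕ) + 2 * (j / 2) = j from by omega] at h1
  rw [Finset.range_eq_Ico]
  exact h1

theorem strictL (f ρ : ℕ → ℕ) (hf : Antitone f) (Bf : ℕ) (hBf : ∀ i, Bf ≤ i → f i = 0)
    (hρ : Antitone ρ) (Br : ℕ) (hBr : ∀ i, Br ≤ i → ρ i = 0)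
    (D : ℕ) (hD : D % 2 = 0)
    (hDf : ∑ i ∈ Finset.range Bf, f i = D) (hDr : ∑ i ∈ Finset.range Br, ρ i = D)
    (hdom : ∀ M, ∑ i ∈ Finset.range M, f i ≤ ∑ i ∈ Finset.range M, ρ i)
    (hfp : ∀ i, i % 2 = 0 → f i % 2 = f (i + 1) % 2)
    (hrp : ∀ i, i % 2 = 1 → ρ i % 2 = ρ (i + 1) % 2)
    (N j : ℕ) (hje : j % 2 = 0) (hjN : j < N)
    (hodd : ∀ i, j ≤ i → i ≤ N → f i % 2 = 1)
    (hpairf : N % 2 = 0 → f (N - 1) = f N) :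
    ∑ i ∈ Finset.range N, f i < ∑ i ∈ Finset.range N, ρ i := by
  by_contra hc
  push_neg at hc
  have hEq : ∑ i ∈ Finset.range N, ρ i = ∑ i ∈ Finset.range N, f i :=
    le_antisymm hc (hdom N)
  have hpre : (∑ i ∈ Finset.range j, f i) % 2 = 0 := even_prefix f hfp j hje
  have hsplitf : ∑ i ∈ Finset.range N, f i
      = ∑ i ∈ Finset.range j, f i + ∑ i ∈ Finset.Ico j N, f i :=
    sum_split f j N (le_of_lt hjN)
  have hmid : (∑ i ∈ Finset.Ico j N, f i) % 2 = (N - j) % 2 :=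
    sum_parity_const f j N (fun i h1 h2 => hodd i h1 (by omega))
  set K := max Br Bf with hK
  by_cases hN2 : N % 2 = 0
  · -- N even
    have hjN2 : j + 2 ≤ N := by omega
    have hfsum : (∑ i ∈ Finset.range N, f i) % 2 = 0 := by omega
    have htail : (∑ i ∈ Finset.Ico (N + 1) (N + 1 + 2 * K), ρ i) % 2 = 0 := by
      apply sum_parity_pairs
      intro m _
      have := hrp (N + 1 + 2 * m) (by omega)
      omega
    have htot : ∑ i ∈ Finset.range (N + 1 + 2 * K), ρ i = D := by
      rw [sum_stab ρ Br hBr _ (by omega), hDr]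
    have hsp1 : ∑ i ∈ Finset.range (N + 1 + 2 * K), ρ i
        = ∑ i ∈ Finset.range (N + 1), ρ i + ∑ i ∈ Finset.Ico (N + 1) (N + 1 + 2 * K), ρ i :=
      sum_split ρ (N + 1) (N + 1 + 2 * K) (by omega)
    have hsp2 : ∑ i ∈ Finset.range (N + 1), ρ i = ∑ i ∈ Finset.range N, ρ i + ρ N :=
      Finset.sum_range_succ ρ N
    have hρN : ρ N % 2 = 0 := by omega
    have hfN : f N % 2 = 1 := hodd N (by omega) le_rfl
    have hfN1 : f (N - 1) = f N := hpairf hN2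
    have hsr : ∑ i ∈ Finset.range N, ρ i = ∑ i ∈ Finset.range (N - 1), ρ i + ρ (N - 1) := by
      have := Finset.sum_range_succ ρ (N - 1)
      rw [show N - 1 + 1 = N from by omega] at this
      exact this
    have hsf : ∑ i ∈ Finset.range N, f i = ∑ i ∈ Finset.range (N - 1), f i + f (N - 1) := by
      have := Finset.sum_range_succ f (N - 1)
      rw [show N - 1 + 1 = N from by omega] at this
      exact this
    have hd1 := hdom (N - 1)
    have hd2 := hdom (N + 1)
    have hsp2f : ∑ i ∈ Finset.range (N + 1), f i = ∑ i ∈ Finset.range N, f i + f N :=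
      Finset.sum_range_succ f N
    have hmono : ρ N ≤ ρ (N - 1) := hρ (by omega)
    omega
  · -- N odd
    have hNo : N % 2 = 1 := by omega
    have hfsum : (∑ i ∈ Finset.range N, f i) % 2 = 1 := by omega
    have htail : (∑ i ∈ Finset.Ico N (N + 2 * K), ρ i) % 2 = 0 := by
      apply sum_parity_pairs
      intro m _
      have := hrp (N + 2 * m) (by omega)
      omega
    have htotρ : ∑ i ∈ Finset.range (N + 2 * K), ρ i = D := by
      rw [sum_stab ρ Br hBr _ (by omega), hDr]
    have htotf : ∑ i ∈ Finset.range (N + 2 * K), f i = D := by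
      rw [sum_stab f Bf hBf _ (by omega), hDf]
    have hsp1 : ∑ i ∈ Finset.range (N + 2 * K), ρ i
        = ∑ i ∈ Finset.range N, ρ i + ∑ i ∈ Finset.Ico N (N + 2 * K), ρ i :=
      sum_split ρ N (N + 2 * K) (by omega)
    have hsp2 : ∑ i ∈ Finset.range (N + 2 * K), f i
        = ∑ i ∈ Finset.range N, f i + ∑ i ∈ Finset.Ico N (N + 2 * K), f i :=
      sum_split f N (N + 2 * K) (by omega)
    omega

theorem pmult_card (x : ℕ → ℕ) (B : ℕ) (hB : ∀ j, B ≤ j → x j = 0) (c : ℕ) :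
    pmult x (c + 1) = ((Finset.range B).filter (fun j => x j = c + 1)).card := by
  have hset : {j : ℕ | x j = c + 1} =
      ↑((Finset.range B).filter (fun j => x j = c + 1)) := by
    ext j
    simp only [Set.mem_setOf_eq, Finset.coe_filter, Finset.mem_range, Set.mem_setOf_eq]
    constructor
    · intro hj
      refine ⟨?_, hj⟩
      by_contra hc
      have := hB j (by omega)
      omega
    · tauto
  show Nat.card {j : ℕ // x j = c + 1} = _
  have : Nat.card {j : ℕ // x j = c + 1} = Nat.card {j : ℕ | x j = c + 1} := rfl
  rw [this, Nat.card_coe_set_eq, hset, Set.ncard_coe_finset]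

section Wlayer

variable (f g : ℕ → ℕ) (d : ℕ) (w : ℕ → ℕ)

theorem w_cast (hw : ∀ j, (w j : ℤ) = wald f g 1 1 d j) (j : ℕ) :
    (w j : ℤ) = (f j : ℤ) + (g j : ℤ) + xiSeq f g 1 1 d j := hw j

theorem w_anti (hf : Antitone f) (hg : Antitone g) (hd : d % 2 = 0)
    (hw : ∀ j, (w j : ℤ) = wald f g 1 1 d j) : Antitone w := by
  apply antitone_nat_of_succ_le
  intro j
  have e0 := w_cast f g d w hw j
  have e1 := w_cast f g d w hw (j + 1)
  have hfm : f (j + 1) ≤ f j := hf (by omega)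
  have hgm : g (j + 1) ≤ g j := hg (by omega)
  have goal : (w (j + 1) : ℤ) ≤ (w j : ℤ) → w (j + 1) ≤ w j := fun h => by exact_mod_cast h
  apply goal
  rcases xi_cases f g d j with hx0 | hx0 | hx0 <;>
    rcases xi_cases f g d (j + 1) with hx1 | hx1 | hx1 <;>
    rw [hx0] at e0 <;> rw [hx1] at e1
  · -- (1,1) impossible
    have ha := (xi_one_iff f g d hd j).mp hx0
    have hb := (xi_one_iff f g d hd (j + 1)).mp hx1
    omega
  · omega
  · omega
  · -- (-1,1) : need parity
    have ha := (xi_neg_iff f g d hd j).mp hx0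
    have hb := (xi_one_iff f g d hd (j + 1)).mp hx1
    obtain ⟨hb1, hb2, hb3, hb4⟩ := hb
    have hdr : f (j + 1) + g (j + 1) < f j + g j := by
      rcases hb4 with h | h
      · omega
      · simpa using h
    obtain ⟨ha1, ha2, ha3, ha4⟩ := ha
    omega
  · -- (-1,-1) impossible
    have ha := (xi_neg_iff f g d hd j).mp hx0
    have hb := (xi_neg_iff f g d hd (j + 1)).mp hx1
    omega
  · -- (-1,0)
    have ha := (xi_neg_iff f g d hd j).mp hx0
    obtain ⟨_, _, _, ha4⟩ := ha
    omega
  · -- (0,1)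
    have hb := (xi_one_iff f g d hd (j + 1)).mp hx1
    obtain ⟨hb1, hb2, hb3, hb4⟩ := hb
    have hdr : f (j + 1) + g (j + 1) < f j + g j := by
      rcases hb4 with h | h
      · omega
      · simpa using h
    omega
  · omega
  · omega

theorem w_supp (B : ℕ) (hfB : ∀ j, B ≤ j → f j = 0) (hgB : ∀ j, B ≤ j → g j = 0)
    (hd : d % 2 = 0) (hw : ∀ j, (w j : ℤ) = wald f g 1 1 d j) :
    ∀ j, B ≤ j → w j = 0 := by
  intro j hj
  have e0 := w_cast f g d w hw j
  have hf0 := hfB j hj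
  have hg0 := hgB j hj
  have hxi : xiSeq f g 1 1 d j = 0 := by
    rcases xi_cases f g d j with hx | hx | hx
    · have := (xi_one_iff f g d hd j).mp hx
      omega
    · have := (xi_neg_iff f g d hd j).mp hx
      omega
    · exact hx
  rw [hxi, hf0, hg0] at e0
  omega

theorem w_sum_int (hw : ∀ j, (w j : ℤ) = wald f g 1 1 d j) (N : ℕ) :
    ((∑ i ∈ Finset.range N, w i : ℕ) : ℤ)
      = (∑ i ∈ Finset.range N, f i : ℕ) + (∑ i ∈ Finset.range N, g i : ℕ)
        + ∑ i ∈ Finset.range N, xiSeq f g 1 1 d i := by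
  push_cast
  rw [← Finset.sum_add_distrib, ← Finset.sum_add_distrib]
  apply Finset.sum_congr rfl
  intro i _
  exact w_cast f g d w hw i

end Wlayer

theorem w_core (f g w ρ1 ρ2 : ℕ → ℕ) (d D1 D2 : ℕ)
    (hf : Antitone f) (hg : Antitone g) (hd : d % 2 = 0)
    (hfp : ∀ i, i % 2 = 0 → f i % 2 = f (i + 1) % 2)
    (hgp : ∀ i, i % 2 = 0 → g i % 2 = g (i + 1) % 2)
    (hw : ∀ j, (w j : ℤ) = wald f g 1 1 d j)
    (Bf : ℕ) (hBf : ∀ i, Bf ≤ i → f i = 0) (hDf : ∑ i ∈ Finset.range Bf, f i = D1)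
    (hD1 : D1 % 2 = 0)
    (hρ1 : Antitone ρ1) (Br1 : ℕ) (hBr1 : ∀ i, Br1 ≤ i → ρ1 i = 0)
    (hDr1 : ∑ i ∈ Finset.range Br1, ρ1 i = D1)
    (hrp1 : ∀ i, i % 2 = 1 → ρ1 i % 2 = ρ1 (i + 1) % 2)
    (hdom1 : ∀ M, ∑ i ∈ Finset.range M, f i ≤ ∑ i ∈ Finset.range M, ρ1 i)
    (hdom2 : ∀ M, ∑ i ∈ Finset.range M, g i ≤ ∑ i ∈ Finset.range M, ρ2 i) :
    ∀ N, ∑ i ∈ Finset.range N, w i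
      ≤ ∑ i ∈ Finset.range N, ρ1 i + ∑ i ∈ Finset.range N, ρ2 i := by
  intro N
  have hscast := w_sum_int f g d w hw N
  rcases xi_invariant f g hf hg d hd hfp hgp N with ⟨hS0, _⟩ | ⟨hS1, j, hjN, hje, hPr, hpr⟩
  · rw [hS0] at hscast
    have h1 := hdom1 N
    have h2 := hdom2 N
    omega
  · rw [hS1] at hscast
    have hpair : N % 2 = 0 → f (N - 1) = f N := by
      intro hN2
      have hN2' : j + 2 ≤ N := by omega
      have := hpr (N - 1) (by omega) (by omega) (by omega)
      rw [show N - 1 + 1 = N from by omega] at this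
      exact this.1
    have hstrict := strictL f ρ1 hf Bf hBf hρ1 Br1 hBr1 D1 hD1 hDf hDr1 hdom1 hfp hrp1
      N j hje hjN (fun i h1 h2 => (hPr i h1 h2).1) hpair
    have h2 := hdom2 N
    omega

theorem w_orth (f g : ℕ → ℕ) (hf : Antitone f) (hg : Antitone g) (B : ℕ)
    (hfB : ∀ j, B ≤ j → f j = 0) (hgB : ∀ j, B ≤ j → g j = 0)
    (d : ℕ) (hd : d % 2 = 0)
    (hfp : ∀ i, i % 2 = 0 → f i % 2 = f (i + 1) % 2)
    (hgp : ∀ i, i % 2 = 0 → g i % 2 = g (i + 1) % 2)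
    (hforth : IsOrthogonal f) (hgorth : IsOrthogonal g)
    (w : ℕ → ℕ) (hw : ∀ j, (w j : ℤ) = wald f g 1 1 d j) : IsOrthogonal w := by
  intro k hk hke
  obtain ⟨m, rfl⟩ : ∃ m, k = m + 1 := ⟨k - 1, by omega⟩
  have hke2 : (m + 1) % 2 = 0 := Nat.even_iff.mp hke
  have hμa : Antitone (fun j => f j + g j) := hf.add hg
  have hμB : ∀ j, B ≤ j → (fun j => f j + g j) j = 0 := fun j hj => by
    simp [hfB j hj, hgB j hj]
  have hwiff : ∀ j, w j = m + 1 ↔ (f j + g j = m + 1 ∧ xiSeq f g 1 1 d j = 0) := by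
    intro j
    have e0 := w_cast f g d w hw j
    constructor
    · intro h
      rcases xi_cases f g d j with hx | hx | hx
      · exfalso
        obtain ⟨_, h2, h3, _⟩ := (xi_one_iff f g d hd j).mp hx
        rw [hx] at e0; omega
      · exfalso
        obtain ⟨_, h2, h3, _⟩ := (xi_neg_iff f g d hd j).mp hx
        rw [hx] at e0; omega
      · rw [hx] at e0
        exact ⟨by omega, hx⟩
    · rintro ⟨h1, h2⟩
      rw [h2] at e0; omega
  have hwB : ∀ j, B ≤ j → w j = 0 := w_supp f g d w B hfB hgB hd hw
  rw [Nat.even_iff, pmult_card w B hwB m]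
  by_cases hex : ∃ j0, f j0 + g j0 = m + 1 ∧ f j0 % 2 = 1 ∧ g j0 % 2 = 1
  · obtain ⟨j0, hj0mu, hj0f, hj0g⟩ := hex
    set a := ptrans (fun j => f j + g j) (m + 1) with haa
    set b := ptrans (fun j => f j + g j) m with hbb
    have hmem : ∀ j, f j + g j = m + 1 ↔ (a ≤ j ∧ j < b) := fun j =>
      pmult_mem (fun j => f j + g j) hμa B hμB m j
    have hj0ab : a ≤ j0 ∧ j0 < b := (hmem j0).mp hj0mu
    have haltb : a < b := by omega
    have hble : b ≤ B := pt_le (fun j => f j + g j) B hμB m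
    have hconst : ∀ jj, a ≤ jj → jj < b → f jj = f j0 ∧ g jj = g j0 := by
      intro jj h1 h2
      have hμjj : f jj + g jj = m + 1 := (hmem jj).mpr ⟨h1, h2⟩
      rcases le_total jj j0 with h | h
      · have hf1 : f j0 ≤ f jj := hf h
        have hg1 : g j0 ≤ g jj := hg h
        omega
      · have hf1 : f jj ≤ f j0 := hf h
        have hg1 : g jj ≤ g j0 := hg h
        omega
    have hPall : ∀ jj, a ≤ jj → jj < b → f jj % 2 = 1 ∧ g jj % 2 = 1 := by
      intro jj h1 h2
      obtain ⟨e1, e2⟩ := hconst jj h1 h2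
      omega
    -- characterize nonzero ξ on the block
    have hiff : ∀ jj, a ≤ jj → jj < b →
        (¬ xiSeq f g 1 1 d jj = 0 ↔ ((jj % 2 = 0 ∧ jj = a) ∨ (jj % 2 = 1 ∧ jj = b - 1))) := by
      intro jj h1 h2
      have hμjj : f jj + g jj = m + 1 := (hmem jj).mpr ⟨h1, h2⟩
      have hP := hPall jj h1 h2
      constructor
      · intro hne
        rcases xi_cases f g d jj with hx | hx | hx
        · left
          obtain ⟨he, _, _, hdr⟩ := (xi_one_iff f g d hd jj).mp hx
          refine ⟨he, ?_⟩
          rcases hdr with h0 | h0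
          · omega
          · have hj1 : jj - 1 < a := by
              apply (pt_iff (fun j => f j + g j) hμa B hμB (m + 1) (jj - 1)).mp
              show m + 1 + 1 ≤ f (jj - 1) + g (jj - 1)
              omega
            omega
        · right
          obtain ⟨ho, _, _, hdr⟩ := (xi_neg_iff f g d hd jj).mp hx
          refine ⟨ho, ?_⟩
          have hj1 : ¬ (jj + 1 < b) := by
            intro hcon
            have : m + 1 ≤ f (jj + 1) + g (jj + 1) := by
              have := (pt_iff (fun j => f j + g j) hμa B hμB m (jj + 1)).mpr hcon
              exact this
            omega
          omega
        · omega
      · intro hc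
        rcases hc with ⟨he, hja⟩ | ⟨ho, hjb⟩
        · have : xiSeq f g 1 1 d jj = 1 := by
            apply (xi_one_iff f g d hd jj).mpr
            refine ⟨he, hP.1, hP.2, ?_⟩
            rcases Nat.eq_zero_or_pos jj with h0 | h0
            · left; exact h0
            · right
              have : m + 1 + 1 ≤ f (jj - 1) + g (jj - 1) := by
                have := (pt_iff (fun j => f j + g j) hμa B hμB (m + 1) (jj - 1)).mpr (by omega)
                exact this
              omega
          omega
        · have : xiSeq f g 1 1 d jj = -1 := by
            apply (xi_neg_iff f g d hd jj).mpr
            refine ⟨ho, hP.1, hP.2, ?_⟩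
            have hnb : ¬ (jj + 1 < b) := by omega
            have : ¬ (m + 1 ≤ f (jj + 1) + g (jj + 1)) := by
              intro hcon
              exact hnb ((pt_iff (fun j => f j + g j) hμa B hμB m (jj + 1)).mp hcon)
            omega
          omega
    -- the multiplicity set as a filtered interval
    have hFeq : (Finset.range B).filter (fun j => w j = m + 1)
        = (Finset.Ico a b).filter (fun j => xiSeq f g 1 1 d j = 0) := by
      ext jj
      simp only [Finset.mem_filter, Finset.mem_range, Finset.mem_Ico]
      constructor
      · rintro ⟨hjB, hj⟩
        obtain ⟨h1, h2⟩ := (hwiff jj).mp hj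
        exact ⟨(hmem jj).mp h1, h2⟩
      · rintro ⟨hjab, hxi⟩
        refine ⟨by omega, (hwiff jj).mpr ⟨(hmem jj).mpr hjab, hxi⟩⟩
    rw [hFeq]
    have hsplit := Finset.card_filter_add_card_filter_not
      (s := Finset.Ico a b) (p := fun j => xiSeq f g 1 1 d j = 0)
    rw [Nat.card_Ico] at hsplit
    have hcongr : (Finset.Ico a b).filter (fun j => ¬ xiSeq f g 1 1 d j = 0)
        = (Finset.Ico a b).filter (fun j => (j % 2 = 0 ∧ j = a) ∨ (j % 2 = 1 ∧ j = b - 1)) := by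
      apply Finset.filter_congr
      intro jj hjj
      rw [Finset.mem_Ico] at hjj
      constructor
      · intro h; exact (hiff jj hjj.1 hjj.2).mp h
      · intro h; exact (hiff jj hjj.1 hjj.2).mpr h
    rw [hcongr] at hsplit
    rcases Nat.mod_two_eq_zero_or_one a with hpa | hpa <;>
      rcases Nat.mod_two_eq_zero_or_one (b - 1) with hpb | hpb
    · -- a even, b-1 even : filter = {a}
      have he : (Finset.Ico a b).filter (fun j => (j % 2 = 0 ∧ j = a) ∨ (j % 2 = 1 ∧ j = b - 1))
          = {a} := by
        ext jj
        simp only [Finset.mem_filter, Finset.mem_Ico, Finset.mem_singleton]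
        omega
      rw [he, Finset.card_singleton] at hsplit
      omega
    · -- a even, b-1 odd : filter = {a, b-1}
      have he : (Finset.Ico a b).filter (fun j => (j % 2 = 0 ∧ j = a) ∨ (j % 2 = 1 ∧ j = b - 1))
          = {a, b - 1} := by
        ext jj
        simp only [Finset.mem_filter, Finset.mem_Ico, Finset.mem_insert, Finset.mem_singleton]
        omega
      rw [he, Finset.card_pair (by omega)] at hsplit
      omega
    · -- a odd, b-1 even : filter = ∅
      have he : (Finset.Ico a b).filter (fun j => (j % 2 = 0 ∧ j = a) ∨ (j % 2 = 1 ∧ j = b - 1))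
          = ∅ := by
        ext jj
        simp only [Finset.mem_filter, Finset.mem_Ico, Finset.notMem_empty, iff_false]
        omega
      rw [he, Finset.card_empty] at hsplit
      omega
    · -- a odd, b-1 odd : filter = {b-1}
      have he : (Finset.Ico a b).filter (fun j => (j % 2 = 0 ∧ j = a) ∨ (j % 2 = 1 ∧ j = b - 1))
          = {b - 1} := by
        ext jj
        simp only [Finset.mem_filter, Finset.mem_Ico, Finset.mem_singleton]
        omega
      rw [he, Finset.card_singleton] at hsplit
      omega
  · -- no index with both parts odd : all ξ vanish on the block
    push_neg at hex
    have hxi0 : ∀ j, f j + g j = m + 1 → xiSeq f g 1 1 d j = 0 := by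
      intro j hj
      rcases xi_cases f g d j with hx | hx | hx
      · obtain ⟨_, h2, h3, _⟩ := (xi_one_iff f g d hd j).mp hx
        exact absurd h3 (hex j hj h2)
      · obtain ⟨_, h2, h3, _⟩ := (xi_neg_iff f g d hd j).mp hx
        exact absurd h3 (hex j hj h2)
      · exact hx
    have hFeq : (Finset.range B).filter (fun j => w j = m + 1)
        = (Finset.range B).filter (fun j => f j + g j = m + 1) := by
      apply Finset.filter_congr
      intro jj _
      constructor
      · intro h; exact ((hwiff jj).mp h).1
      · intro h; exact (hwiff jj).mpr ⟨h, hxi0 jj h⟩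
    rw [hFeq]
    apply paircard
    intro t
    have hebf := evenblock f hf B hfB hfp hforth (2 * t) (by omega)
    have hebg := evenblock g hg B hgB hgp hgorth (2 * t) (by omega)
    constructor
    · intro hmem
      rw [Finset.mem_filter, Finset.mem_range] at hmem
      obtain ⟨htB, hμ⟩ := hmem
      have hnP := hex (2 * t) hμ
      have hfeven : f (2 * t) % 2 = 0 ∧ g (2 * t) % 2 = 0 := by
        rcases Nat.mod_two_eq_zero_or_one (f (2 * t)) with h | h
        · constructor
          · exact h
          · omega
        · exfalso
          have : g (2 * t) % 2 = 1 := by omega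
          exact (hnP h) this
      have hf1 : f (2 * t + 1) = f (2 * t) := hebf hfeven.1
      have hg1 : g (2 * t + 1) = g (2 * t) := hebg hfeven.2
      rw [Finset.mem_filter, Finset.mem_range]
      constructor
      · by_contra hc
        have := hfB (2 * t + 1) (by omega)
        have := hgB (2 * t + 1) (by omega)
        omega
      · omega
    · intro hmem
      rw [Finset.mem_filter, Finset.mem_range] at hmem
      obtain ⟨htB, hμ⟩ := hmem
      have hnP := hex (2 * t + 1) hμ
      have hfeven : f (2 * t + 1) % 2 = 0 ∧ g (2 * t + 1) % 2 = 0 := by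
        rcases Nat.mod_two_eq_zero_or_one (f (2 * t + 1)) with h | h
        · constructor
          · exact h
          · omega
        · exfalso
          have : g (2 * t + 1) % 2 = 1 := by omega
          exact (hnP h) this
      have hp1 := hfp (2 * t) (by omega)
      have hp2 := hgp (2 * t) (by omega)
      have hf1 : f (2 * t + 1) = f (2 * t) := hebf (by omega)
      have hg1 : g (2 * t + 1) = g (2 * t) := hebg (by omega)
      rw [Finset.mem_filter, Finset.mem_range]
      exact ⟨by omega, by omega⟩

/-- type D.  `d₁, d₂` even, `d = d₁+d₂`, `λ₁, λ₂` special orthogonal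
partitions of `d₁, d₂`, `W = W(λ₁,λ₂)` with `ε₁ = ε₂ = 1`.
(i) `W` is an orthogonal partition of `d`;
(ii) if `ν₁, ν₂, ν` are D-collapses of `λ₁ᵗ`, `λ₂ᵗ`, `Wᵗ` then `ν₁ ∪ ν₂ ≤ ν`;
(iii) if moreover `η` is a D-collapse of `(ν₁ ∪ ν₂)ᵗ` then `W ≤ η`. -/
theorem stmt2 (d1 d2 : ℕ) (hd1 : Even d1) (hd2 : Even d2) (lam1 lam2 : ℕ → ℕ)
    (h1 : IsPartitionOf lam1 d1) (h1o : IsOrthogonal lam1)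
    (h1s : IsSymplectic (ptrans lam1))
    (h2 : IsPartitionOf lam2 d2) (h2o : IsOrthogonal lam2)
    (h2s : IsSymplectic (ptrans lam2)) :
    (∃ w : ℕ → ℕ, (∀ j, (w j : ℤ) = wald lam1 lam2 1 1 (d1+d2) j) ∧
        IsPartitionOf w (d1+d2) ∧ IsOrthogonal w) ∧
    (∀ w : ℕ → ℕ, (∀ j, (w j : ℤ) = wald lam1 lam2 1 1 (d1+d2) j) →
      ∀ ν1 ν2 ν : ℕ → ℕ,
        IsDCollapse d1 (ptrans lam1) ν1 →
        IsDCollapse d2 (ptrans lam2) ν2 →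
        IsDCollapse (d1+d2) (ptrans w) ν →
        ∀ u : ℕ → ℕ, IsUnionOf u ν1 ν2 →
          NDomLE u ν ∧
          ∀ η : ℕ → ℕ, IsDCollapse (d1+d2) (ptrans u) η →
            NDomLE w η) := by
  obtain ⟨ha1, B1, hB1, hs1⟩ := h1
  obtain ⟨ha2, B2, hB2, hs2⟩ := h2
  set B := max B1 B2 with hBdef
  have hfB : ∀ j, B ≤ j → lam1 j = 0 := fun j hj => hB1 j (by omega)
  have hgB : ∀ j, B ≤ j → lam2 j = 0 := fun j hj => hB2 j (by omega)
  have hsB1 : ∑ j ∈ Finset.range B, lam1 j = d1 := by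
    rw [sum_stab lam1 B1 hB1 B (le_max_left _ _)]; exact hs1
  have hsB2 : ∑ j ∈ Finset.range B, lam2 j = d2 := by
    rw [sum_stab lam2 B2 hB2 B (le_max_right _ _)]; exact hs2
  have hD1 : d1 % 2 = 0 := Nat.even_iff.mp hd1
  have hD2 : d2 % 2 = 0 := Nat.even_iff.mp hd2
  have hd : (d1 + d2) % 2 = 0 := by omega
  have hfp : ∀ i, i % 2 = 0 → lam1 i % 2 = lam1 (i + 1) % 2 :=
    pairP_of_symp lam1 ha1 B1 hB1 h1s
  have hgp : ∀ i, i % 2 = 0 → lam2 i % 2 = lam2 (i + 1) % 2 :=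
    pairP_of_symp lam2 ha2 B2 hB2 h2s
  -- ξ-sum vanishes at B
  have hSB : ∑ j ∈ Finset.range B, xiSeq lam1 lam2 1 1 (d1 + d2) j = 0 := by
    rcases xi_invariant lam1 lam2 ha1 ha2 (d1 + d2) hd hfp hgp B with ⟨h, _⟩ | ⟨_, j, hj, _, hPr, _⟩
    · exact h
    · exfalso
      have hPB := hPr B (le_of_lt hj) le_rfl
      have := hfB B le_rfl
      have := hPB.1
      omega
  have hwpart : ∀ w' : ℕ → ℕ, (∀ j, (w' j : ℤ) = wald lam1 lam2 1 1 (d1 + d2) j) →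
      IsPartitionOf w' (d1 + d2) := by
    intro w' hw'
    refine ⟨w_anti lam1 lam2 (d1 + d2) w' ha1 ha2 hd hw', B,
      w_supp lam1 lam2 (d1 + d2) w' B hfB hgB hd hw', ?_⟩
    have hscast := w_sum_int lam1 lam2 (d1 + d2) w' hw' B
    rw [hSB, hsB1, hsB2] at hscast
    omega
  have hworth : ∀ w' : ℕ → ℕ, (∀ j, (w' j : ℤ) = wald lam1 lam2 1 1 (d1 + d2) j) →
      IsOrthogonal w' := fun w' hw' =>
    w_orth lam1 lam2 ha1 ha2 B hfB hgB (d1 + d2) hd hfp hgp h1o h2o w' hw'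
  constructor
  · -- existence of w
    have hnn : ∀ j, 0 ≤ wald lam1 lam2 1 1 (d1 + d2) j := by
      intro j
      show 0 ≤ (lam1 j : ℤ) + (lam2 j : ℤ) + xiSeq lam1 lam2 1 1 (d1 + d2) j
      rcases xi_cases lam1 lam2 (d1 + d2) j with hx | hx | hx
      · rw [hx]; positivity
      · have := (xi_neg_iff lam1 lam2 (d1 + d2) hd j).mp hx
        rw [hx]
        have : 1 ≤ lam1 j := by omega
        omega
      · rw [hx]; positivity
    refine ⟨fun j => (wald lam1 lam2 1 1 (d1 + d2) j).toNat, ?_, ?_, ?_⟩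
    · exact fun j => Int.toNat_of_nonneg (hnn j)
    · exact hwpart _ (fun j => Int.toNat_of_nonneg (hnn j))
    · exact hworth _ (fun j => Int.toNat_of_nonneg (hnn j))
  · -- main dominance statements
    intro w hw ν1 ν2 ν hc1 hc2 hcν u hu
    obtain ⟨hν1p, hν1o, hν1dom, _⟩ := hc1
    obtain ⟨hν2p, hν2o, hν2dom, _⟩ := hc2
    obtain ⟨_, _, _, hcνmax⟩ := hcν
    obtain ⟨hν1a, Bn1, hBn1, hsn1⟩ := id hν1p
    obtain ⟨hν2a, Bn2, hBn2, hsn2⟩ := id hν2p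
    -- the transposed collapses ρᵢ = ν_i^t
    have hρ1a : Antitone (ptrans ν1) := pt_anti ν1 hν1a Bn1 hBn1
    have hρ2a : Antitone (ptrans ν2) := pt_anti ν2 hν2a Bn2 hBn2
    have hBr1 : ∀ k, ν1 0 ≤ k → ptrans ν1 k = 0 := fun k hk => pt_supp ν1 hν1a Bn1 hBn1 k hk
    have hBr2 : ∀ k, ν2 0 ≤ k → ptrans ν2 k = 0 := fun k hk => pt_supp ν2 hν2a Bn2 hBn2 k hk
    have hDr1 : ∑ k ∈ Finset.range (ν1 0), ptrans ν1 k = d1 := by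
      rw [pt_total ν1 hν1a Bn1 hBn1 (ν1 0) le_rfl]; exact hsn1
    have hDr2 : ∑ k ∈ Finset.range (ν2 0), ptrans ν2 k = d2 := by
      rw [pt_total ν2 hν2a Bn2 hBn2 (ν2 0) le_rfl]; exact hsn2
    have hrp1 : ∀ i, i % 2 = 1 → ptrans ν1 i % 2 = ptrans ν1 (i + 1) % 2 :=
      ptpair_of_orth ν1 hν1a Bn1 hBn1 hν1o
    have hrp2 : ∀ i, i % 2 = 1 → ptrans ν2 i % 2 = ptrans ν2 (i + 1) % 2 :=
      ptpair_of_orth ν2 hν2a Bn2 hBn2 hν2o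
    have hdom1 : NDomLE lam1 (ptrans ν1) :=
      dom_dual ν1 lam1 d1 hν1p ⟨ha1, B1, hB1, hs1⟩ hν1dom
    have hdom2 : NDomLE lam2 (ptrans ν2) :=
      dom_dual ν2 lam2 d2 hν2p ⟨ha2, B2, hB2, hs2⟩ hν2dom
    have hcore := w_core lam1 lam2 w (ptrans ν1) (ptrans ν2) (d1 + d2) d1 d2
      ha1 ha2 hd hfp hgp hw B hfB hsB1 hD1 hρ1a (ν1 0) hBr1 hDr1 hrp1 hdom1 hdom2
    -- u-side
    obtain ⟨hua, ⟨Bu, hBu⟩, humult⟩ := hu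
    have hptu : ∀ k, ptrans u k = ptrans ν1 k + ptrans ν2 k :=
      pt_union u ν1 ν2 hua Bu hBu hν1a Bn1 hBn1 hν2a Bn2 hBn2 humult
    have hNwu : NDomLE w (ptrans u) := by
      intro N
      have hre : ∑ k ∈ Finset.range N, ptrans u k
          = ∑ k ∈ Finset.range N, (ptrans ν1 k + ptrans ν2 k) :=
        Finset.sum_congr rfl (fun k _ => hptu k)
      rw [hre, Finset.sum_add_distrib]
      exact hcore N
    have hupart : IsPartitionOf u (d1 + d2) := by
      refine ⟨hua, Bu, hBu, ?_⟩
      set K := max (u 0) (max (ν1 0) (ν2 0)) with hK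
      have e0 : ∑ k ∈ Finset.range K, ptrans u k = ∑ j ∈ Finset.range Bu, u j :=
        pt_total u hua Bu hBu K (by omega)
      have e1 : ∑ k ∈ Finset.range K, ptrans ν1 k = d1 := by
        rw [pt_total ν1 hν1a Bn1 hBn1 K (by omega)]; exact hsn1
      have e2 : ∑ k ∈ Finset.range K, ptrans ν2 k = d2 := by
        rw [pt_total ν2 hν2a Bn2 hBn2 K (by omega)]; exact hsn2
      have e3 : ∑ k ∈ Finset.range K, ptrans u k
          = ∑ k ∈ Finset.range K, ptrans ν1 k + ∑ k ∈ Finset.range K, ptrans ν2 k := by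
        rw [← Finset.sum_add_distrib]
        exact Finset.sum_congr rfl (fun k _ => hptu k)
      omega
    have huorth : IsOrthogonal u := by
      intro k hk hke
      rw [humult k hk]
      exact Even.add (hν1o k hk hke) (hν2o k hk hke)
    have hwp : IsPartitionOf w (d1 + d2) := hwpart w hw
    have hNuw : NDomLE u (ptrans w) := dom_dual w u (d1 + d2) hwp hupart hNwu
    refine ⟨hcνmax u hupart huorth hNuw, ?_⟩
    intro η hcη
    obtain ⟨_, _, _, hcηmax⟩ := hcη
    exact hcηmax w hwp (hworth w hw) hNwu
end
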